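/- arXiv:math/9812115 — 3 statements merged into one kernel-verified Lean document; each statement's English description precedes it below -/
import Mathlib

section
/- Let T be an Aronszajn tree and n ≥ 1. If X ⊆ ⁿT is uncountable and downward closed, then there exist β < ω₁ and an uncountable Y ⊆ X such that, writing Y_γ = Y ∩ ⁿT_γ: (1) for all β ≤ γ₀ < γ₁ < ω₁, Y_{γ₀} = {x̄↾γ₀ : x̄ ∈ Y_{γ₁}}; and (2) Y_γ is dispersed for every γ with β ≤ γ < ω₁. -/
noncomputable section

open Cardinal Set

/-- The first uncountable ordinal. -/
def omega1 : Ordinal.{0} := (Cardinal.aleph 1).ord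

universe u v w

/-- A carrier together with a strict order relation and a level function. -/
structure PreTree (α : Type u) where
  lt : α → α → Prop
  lev : α → Ordinal.{u_1}

namespace PreTree

variable {α : Type u}

/-- reflexive closure of the tree order -/
def le (T : PreTree α) (x y : α) : Prop := x = y ∨ T.lt x y

/-- tree axioms: the relation is transitive, the level function is strictly increasing,
the predecessors of any node are linearly ordered and there is exactly one predecessor
at each smaller level (so the predecessors are well-ordered of order type `lev x`). -/
def IsTree (T : PreTree α) : Prop :=
  (∀ x y z, T.lt x y → T.lt y z → T.lt x z) ∧
  (∀ x y, T.lt x y → T.lev x < T.lev y) ∧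
  (∀ x y z, T.lt y x → T.lt z x → y = z ∨ T.lt y z ∨ T.lt z y) ∧
  (∀ x o, o < T.lev x → ∃! y, T.lt y x ∧ T.lev y = o)

/-- an ω₁-tree: height ω₁, countable nonempty levels, each node has ℵ₀ many
immediate successors and extensions in every higher level below ω₁. -/
def IsOmega1Tree (T : PreTree α) : Prop :=
  T.IsTree ∧
  (∀ x, T.lev x < omega1) ∧
  (∀ o, o < omega1 → {x | T.lev x = o}.Countable) ∧
  (∀ o, o < omega1 → ∃ x, T.lev x = o) ∧
  (∀ x, {y | T.lt x y ∧ T.lev y = T.lev x + 1}.Infinite) ∧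
  (∀ x o, T.lev x < o → o < omega1 → ∃ y, T.lt x y ∧ T.lev y = o)

def IsAntichain' (T : PreTree α) (s : Set α) : Prop :=
  ∀ x ∈ s, ∀ y ∈ s, x ≠ y → ¬ T.lt x y ∧ ¬ T.lt y x

def IsChain' (T : PreTree α) (s : Set α) : Prop :=
  ∀ x ∈ s, ∀ y ∈ s, x = y ∨ T.lt x y ∨ T.lt y x

/-- a Suslin tree: an ω₁-tree with no uncountable antichain -/
def Suslin (T : PreTree α) : Prop :=
  T.IsOmega1Tree ∧ ∀ s : Set α, T.IsAntichain' s → s.Countable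

/-- an Aronszajn tree: an ω₁-tree with no uncountable chain -/
def Aronszajn (T : PreTree α) : Prop :=
  T.IsOmega1Tree ∧ ∀ s : Set α, T.IsChain' s → s.Countable

/-- a special tree: there is an order preserving map into ℚ -/
def Special (T : PreTree α) : Prop :=
  ∃ f : α → ℚ, ∀ x y, T.lt x y → f x < f y

end PreTree

/-- the carrier of the product of a family of trees: tuples of nodes of a common level -/
abbrev ProdCarrier {ι : Type u} {β : ι → Type v} (A : ∀ i, PreTree (β i)) : Type (max u v) :=
  {f : ∀ i, β i // ∃ o, ∀ i, (A i).lev (f i) = o}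

/-- the product of a family of trees, ordered coordinatewise -/
def prodTree {ι : Type u} {β : ι → Type v} (A : ∀ i, PreTree (β i)) :
    PreTree (ProdCarrier A) where
  lt f g := ∀ i, (A i).lt (f.1 i) (g.1 i)
  lev f := ⨆ i, (A i).lev (f.1 i)

/-- the carrier of the product of two trees -/
abbrev ProdCarrier₂ {α : Type u} {β : Type v} (A : PreTree α) (B : PreTree β) : Type (max u v) :=
  {p : α × β // A.lev p.1 = B.lev p.2}

/-- the product of two trees -/
def prodTree₂ {α : Type u} {β : Type v} (A : PreTree α) (B : PreTree β) :
    PreTree (ProdCarrier₂ A B) where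
  lt p q := A.lt p.1.1 q.1.1 ∧ B.lt p.1.2 q.1.2
  lev p := A.lev p.1.1

abbrev ConeCarrier {α : Type u} (T : PreTree α) (a : α) : Type u := {x : α // x = a ∨ T.lt a x}

/-- the subtree `T_a` of all extensions of `a`, with levels shifted to start at `0` -/
def cone {α : Type u} (T : PreTree α) (a : α) : PreTree (ConeCarrier T a) where
  lt x y := T.lt x.1 y.1
  lev x := T.lev x.1 - T.lev a

/-- the derived tree determined by a tuple of (distinct, same-level) nodes:
the product of the cones above the nodes -/
def derivedTree {α : Type u} (T : PreTree α) {n : ℕ} (a : Fin (n+1) → α) :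
    PreTree (ProdCarrier (fun i => cone T (a i))) :=
  prodTree (fun i => cone T (a i))

/-- every derived tree of `T` is a Suslin tree -/
def AllDerivedSuslin {α : Type u} (T : PreTree α) : Prop :=
  ∀ (n : ℕ) (a : Fin (n+1) → α), Function.Injective a →
    (∀ i, T.lev (a i) = T.lev (a 0)) → (derivedTree T a).Suslin

/-- carrier of the disjoint union of the trees with indices in the finite set `d` -/
abbrev UnionCarrier {I : Type u} (β : I → Type v) (d : Finset I) : Type (max u v) :=
  {p : Sigma β // p.1 ∈ d}

/-- the disjoint union of the trees with indices in `d` -/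
def unionTree {I : Type u} {β : I → Type v} (A : ∀ ζ, PreTree (β ζ)) (d : Finset I) :
    PreTree (UnionCarrier β d) where
  lt x y := ∃ h : x.1.1 = y.1.1, (A y.1.1).lt (cast (congrArg β h) x.1.2) y.1.2
  lev x := (A x.1.1).lev x.1.2

/-! clubs, stationary sets and the diamond principle on ω₁ -/

/-- `C` is a closed unbounded subset of ω₁ -/
def IsClubO1 (C : Set Ordinal) : Prop :=
  (∀ c ∈ C, c < omega1) ∧
  (∀ o, o < omega1 → ∃ c ∈ C, o ≤ c) ∧
  (∀ o, o < omega1 → o ≠ 0 → (∀ b, o ≠ b + 1) →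
    (∀ b, b < o → ∃ c ∈ C, b ≤ c ∧ c < o) → o ∈ C)

/-- `S` is stationary in ω₁ -/
def StationaryO1 (S : Set Ordinal) : Prop :=
  ∀ C, IsClubO1 C → (S ∩ C).Nonempty

/-- the diamond principle ◇ on ω₁ -/
def DiamondO1 : Prop :=
  ∃ S : Ordinal → Set Ordinal,
    (∀ ξ, S ξ ⊆ Set.Iio ξ) ∧
    ∀ X : Set Ordinal, X ⊆ Set.Iio omega1 →
      StationaryO1 {ξ | ξ < omega1 ∧ X ∩ Set.Iio ξ = S ξ}

/-! ω₁-like orders, parity, patterns -/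

/-- `j` is the immediate successor of `i` -/
def ISucc {I : Type u} [LinearOrder I] (i j : I) : Prop :=
  i < j ∧ ∀ k, i < k → j ≤ k

/-- `j` is the `n`-th iterated immediate successor of `i` -/
def IterSucc {I : Type u} [LinearOrder I] : ℕ → I → I → Prop
  | 0, i, j => i = j
  | n+1, i, j => ∃ k, IterSucc n i k ∧ ISucc k j

/-- `i` is a limit point: not an immediate successor (least elements count as limits) -/
def ILimit {I : Type u} [LinearOrder I] (i : I) : Prop := ¬ ∃ j, ISucc j i

/-- `i` is even: of the form `δ + n` with `δ` a limit and `n` even -/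
def IEven {I : Type u} [LinearOrder I] (i : I) : Prop :=
  ∃ (δ : I) (n : ℕ), ILimit δ ∧ Even n ∧ IterSucc n δ i

/-- `i` is odd: of the form `δ + n` with `δ` a limit and `n` odd -/
def IOdd {I : Type u} [LinearOrder I] (i : I) : Prop :=
  ∃ (δ : I) (n : ℕ), ILimit δ ∧ Odd n ∧ IterSucc n δ i

/-- an ω₁-like order: uncountable, proper initial segments countable,
with a least element, and every element has an immediate successor -/
def IsOmega1Like (I : Type u) [LinearOrder I] : Prop :=
  ¬ (Set.univ : Set I).Countable ∧
  (∀ i : I, {j | j < i}.Countable) ∧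
  (∃ b : I, ∀ i, b ≤ i) ∧
  (∀ i : I, ∃ j, ISucc i j)

/-- the initial segment below `δ` is well-ordered, of order type `ot` -/
def SegType {I : Type u} [LinearOrder I] (δ : I) (ot : Ordinal.{0}) : Prop :=
  ∃ h : IsWellOrder {j : I // j < δ} (fun a b => a < b),
    @Ordinal.type {j : I // j < δ} (fun a b => a < b) h = Ordinal.lift.{u, 0} ot

open Classical in
/-- the finite set `{a, b, c, d}` -/
def quadF {I : Type u} (a b c d : I) : Finset I := {a, b, c, d}

/-- a pattern over `I`: `sp` consists of nonempty finite subsets of `I` closed under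
supersets, and `su` is its complement among the nonempty finite subsets -/
def IsPatternI {I : Type u} (su sp : Set (Finset I)) : Prop :=
  (∀ e ∈ sp, e.Nonempty) ∧
  (∀ e ∈ sp, ∀ e' : Finset I, e ⊆ e' → e' ∈ sp) ∧
  su = {e | e.Nonempty ∧ e ∉ sp}

/-- `E` assigns to each countable limit ordinal `δ ≠ 0` a canonical code `E δ ⊆ ω`
of a well-order of ω of order type `δ` -/
def GoodCodes (E : Ordinal → Set ℕ) : Prop :=
  E 0 = ∅ ∧
  ∀ δ : Ordinal, δ < omega1 → δ ≠ 0 → (∀ b, δ ≠ b + 1) →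
    ∃ (r : ℕ → ℕ → Prop) (h : IsWellOrder ℕ r),
      @Ordinal.type ℕ r h = δ ∧ E δ = {m | ∃ a b, r a b ∧ m = Nat.pair a b}

/-- a simple pattern: the pattern respects the "simplicity table" -/
def IsSimplePatternI {I : Type u} [LinearOrder I] (E : Ordinal → Set ℕ)
    (su sp : Set (Finset I)) : Prop :=
  IsPatternI su sp ∧
  -- Suslin column: all triples, pairs and singletons
  (∀ e : Finset I, e.Nonempty → e.card ≤ 3 → e ∈ su) ∧
  -- Suslin column: quadruples
  (∀ ζ₁ ζ₂ ζ₃ ζ₄ : I, ζ₁ < ζ₂ → ζ₂ < ζ₃ → ζ₃ < ζ₄ →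
    ((IEven ζ₁ ∧ IEven ζ₂ ∧ IEven ζ₃ ∧ IEven ζ₄) ∨
     (IOdd ζ₁ ∧ IOdd ζ₂ ∧ IOdd ζ₃ ∧ IOdd ζ₄) ∨
     (IOdd ζ₁ ∧ IEven ζ₂ ∧ IOdd ζ₃ ∧ IEven ζ₄) ∨
     (IOdd ζ₁ ∧ IEven ζ₂ ∧ IEven ζ₃ ∧ IOdd ζ₄) ∨
     (ILimit ζ₁ ∧ IEven ζ₂ ∧ IOdd ζ₃ ∧ IOdd ζ₄) ∨
     (ISucc ζ₁ ζ₂ ∧ IOdd ζ₃ ∧ IOdd ζ₄)) →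
    quadF ζ₁ ζ₂ ζ₃ ζ₄ ∈ su) ∧
  (∀ (δ : I) (ot : Ordinal) (i : ℕ) (x1 x3 x4 xi : I),
    ILimit δ → SegType δ ot →
    IterSucc 1 δ x1 → IterSucc 3 δ x3 → IterSucc 4 δ x4 → IterSucc (5+i) δ xi →
    i ∈ E ot → quadF x1 x3 x4 xi ∈ su) ∧
  -- special column: all quintuples (and larger sets)
  (∀ e : Finset I, 5 ≤ e.card → e ∈ sp) ∧
  -- special column: quadruples
  (∀ ζ₁ ζ₂ ζ₃ ζ₄ : I, ζ₁ < ζ₂ → ζ₂ < ζ₃ → ζ₃ < ζ₄ →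
    ((IEven ζ₁ ∧ IOdd ζ₂ ∧ IEven ζ₃ ∧ IOdd ζ₄) ∨
     (IOdd ζ₁ ∧ IEven ζ₂ ∧ IEven ζ₃ ∧ IEven ζ₄) ∨
     (IEven ζ₁ ∧ ¬ ILimit ζ₁ ∧ IEven ζ₂ ∧ IOdd ζ₃ ∧ IOdd ζ₄) ∨
     (((IEven ζ₁ ∧ IOdd ζ₂) ∨ (IOdd ζ₁ ∧ IEven ζ₂)) ∧ ¬ ISucc ζ₁ ζ₂ ∧ IOdd ζ₃ ∧ IOdd ζ₄)) →
    quadF ζ₁ ζ₂ ζ₃ ζ₄ ∈ sp) ∧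
  (∀ (δ : I) (ot : Ordinal) (i : ℕ) (x1 x3 x4 xi : I),
    ILimit δ → SegType δ ot →
    IterSucc 1 δ x1 → IterSucc 3 δ x3 → IterSucc 4 δ x4 → IterSucc (5+i) δ xi →
    i ∉ E ot → quadF x1 x3 x4 xi ∈ sp)

/-- the ordinals below ω₁, as a linear order -/
abbrev O1 : Type 1 := {o : Ordinal // o < omega1}

theorem nat_lt_omega1 (n : ℕ) : (n : Ordinal) < omega1 := by
  have h1 : (n : Ordinal) < Ordinal.omega0 := Ordinal.nat_lt_omega0 n
  have h2 : Ordinal.omega0 ≤ omega1 := by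
    rw [← Cardinal.ord_aleph0]
    exact Cardinal.ord_le_ord.mpr (Cardinal.aleph0_le_aleph 1)
  exact h1.trans_le h2

/-- the natural number `n` as an element of `O1` -/
def o1 (n : ℕ) : O1 := ⟨(n : Ordinal), nat_lt_omega1 n⟩

/-- the sequence of trees realizes the pattern `(su, sp)`: for `d ∈ su` the disjoint
union `T^d` and all of its derived trees are Suslin, and for `d ∈ sp` the full
product `T^(d)` is special -/
def HasPattern {I : Type u} {β : I → Type v} (A : ∀ ζ, PreTree (β ζ))
    (su sp : Set (Finset I)) : Prop :=
  (∀ d ∈ su, (unionTree A d).Suslin ∧ AllDerivedSuslin (unionTree A d)) ∧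
  (∀ d ∈ sp, (prodTree (fun ζ : {x // x ∈ d} => A ζ.1)).Special)

/-- a club-embedding of `A` into `B`: a level-preserving order-embedding defined on
the restriction of `A` to a club set of levels -/
def ClubEmbeds {α : Type u} {β : Type v} (A : PreTree α) (B : PreTree β) : Prop :=
  ∃ C : Set Ordinal, IsClubO1 C ∧
    ∃ h : {x : α // A.lev x ∈ C} → β,
      Function.Injective h ∧
      (∀ x, B.lev (h x) = A.lev x.1) ∧
      (∀ x y, A.lt x.1 y.1 ↔ B.lt (h x) (h y))

/-- the collection `{T^d : d ∈ su}` is primal: every derived tree of every member is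
Suslin, and every Suslin tree contains a club-embedded copy of a derived tree of a member -/
def Primal {I : Type u} {β : I → Type v} (A : ∀ ζ, PreTree (β ζ)) (su : Set (Finset I)) : Prop :=
  (∀ d ∈ su, (unionTree A d).Suslin ∧ AllDerivedSuslin (unionTree A d)) ∧
  ∀ (γ : Type w) (S : PreTree γ), S.Suslin →
    ∃ d ∈ su, ∃ (n : ℕ) (a : Fin (n+1) → UnionCarrier β d),
      Function.Injective a ∧
      (∀ i, (unionTree A d).lev (a i) = (unionTree A d).lev (a 0)) ∧
      ClubEmbeds (derivedTree (unionTree A d) a) S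

/-! the specializing poset S(T) -/

/-- domain of a partial function into ℚ -/
def pdom {α : Type u} (h : α → Option ℚ) : Set α := {x | h x ≠ none}

/-- the finite function `h` (living on level ≥ a) bounds the approximation `f`
(with `last f = a`): on each point of its domain it is strictly above the value of `f`
at the unique level-`a` restriction of the point -/
def Bounds {α : Type u} (T : PreTree α) (a : Ordinal) (f h : α → Option ℚ) : Prop :=
  ∀ x q, h x = some q → ∃ y r, T.le y x ∧ T.lev y = a ∧ f y = some r ∧ r < q

/-- a requirement of height `γ` and arity `n` -/
def IsRequirement {α : Type u} (T : PreTree α) (γ : Ordinal) (n : ℕ)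
    (H : Set (α → Option ℚ)) : Prop :=
  ∀ h ∈ H, (pdom h).Finite ∧ (pdom h).ncard = n ∧ ∀ x ∈ pdom h, T.lev x = γ

/-- the requirement `H` of height `γ` is dispersed -/
def DispersedReq {α : Type u} (T : PreTree α) (γ : Ordinal) (H : Set (α → Option ℚ)) : Prop :=
  ∀ t : Set α, t.Finite → t ⊆ {x | T.lev x = γ} → ∃ h ∈ H, ∀ x ∈ t, h x = none

/-- `h'` is the restriction `h↾γ` of the finite function `h` to level `γ`:
`h'(x↾γ) = h(x)` -/
def IsRestrictTo {α : Type u} (T : PreTree α) (γ : Ordinal) (h h' : α → Option ℚ) : Prop :=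
  (∀ y, h' y ≠ none ↔ (T.lev y = γ ∧ ∃ x, T.le y x ∧ h x ≠ none)) ∧
  (∀ y x, T.lev y = γ → T.le y x → h x ≠ none → h' y = h x)

/-- the approximation `f` (with `last f = a`) fulfills the requirement `H` of height `a` -/
def FulfillsReq {α : Type u} (T : PreTree α) (a : Ordinal) (f : α → Option ℚ)
    (H : Set (α → Option ℚ)) : Prop :=
  ∀ t : Set α, t.Finite → t ⊆ {x | T.lev x = a} →
    ∃ h ∈ H, Bounds T a f h ∧ ∀ x ∈ t, h x = none

/-- an approximation: a partial specializing function defined exactly on the nodes of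
level ≤ a -/
def IsApprox {α : Type u} (T : PreTree α) (a : Ordinal) (f : α → Option ℚ) : Prop :=
  a < omega1 ∧
  (∀ x, f x ≠ none ↔ T.lev x ≤ a) ∧
  (∀ x y qx qy, T.lt x y → f x = some qx → f y = some qy → qx < qy)

/-- a promise with base `b`: countable nonempty coherent sets of dispersed requirements,
one for each level `γ` with `b ≤ γ < ω₁`, all of one fixed arity -/
def IsPromise {α : Type u} (T : PreTree α) (b : Ordinal)
    (Γ : Ordinal → Set (Set (α → Option ℚ))) : Prop :=
  b < omega1 ∧
  (∃ n : ℕ, ∀ γ, b ≤ γ → γ < omega1 → ∀ H ∈ Γ γ, IsRequirement T γ n H) ∧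
  (∀ γ, b ≤ γ → γ < omega1 →
    (Γ γ).Countable ∧ (Γ γ).Nonempty ∧ ∀ H ∈ Γ γ, DispersedReq T γ H) ∧
  (∀ γ₀ γ₁, b ≤ γ₀ → γ₀ < γ₁ → γ₁ < omega1 →
    Γ γ₀ = {H' | ∃ H ∈ Γ γ₁, H' = {h' | ∃ h ∈ H, IsRestrictTo T γ₀ h h'}})

/-- a condition of the specializing poset `S(T)`: an approximation together with a
promise which it fulfills -/
structure SCond {α : Type u} (T : PreTree α) where
  last : Ordinal
  f : α → Option ℚ
  base : Ordinal
  Γ : Ordinal → Set (Set (α → Option ℚ))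
  approx : IsApprox T last f
  promise : IsPromise T base Γ
  base_le : base ≤ last
  fulfills : ∀ H ∈ Γ last, FulfillsReq T last f H

/-- `q` extends `p` in `S(T)` -/
def SExtends {α : Type u} {T : PreTree α} (q p : SCond T) : Prop :=
  p.last ≤ q.last ∧
  (∀ x, p.f x ≠ none → q.f x = p.f x) ∧
  ∀ γ, q.last ≤ γ → γ < omega1 → p.Γ γ ⊆ q.Γ γ

/-! the naive specializing poset S₂(T) -/

/-- a condition of the poset `S₂(T)` -/
def IsS2Cond {α : Type u} (T : PreTree α) (a : Ordinal) (f : α → Option ℚ) : Prop :=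
  IsApprox T a f ∧
  ∀ a₀, a₀ < a → ∀ (n : ℕ) (x : Fin (n+1) → α) (q : Fin (n+1) → ℚ),
    (∀ i, T.lev (x i) = a₀) →
    (∀ i, ∃ r, f (x i) = some r ∧ r < q i) →
    ∃ y : Fin (n+1) → α, ∀ i, T.lt (x i) (y i) ∧ T.lev (y i) = a ∧ f (y i) = some (q i)

/-- the disjoint union of two trees -/
def sumTree {α : Type u} {β : Type v} (A : PreTree α) (B : PreTree β) : PreTree (α ⊕ β) where
  lt x y :=
    match x, y with
    | Sum.inl a, Sum.inl b => A.lt a b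
    | Sum.inr a, Sum.inr b => B.lt a b
    | _, _ => False
  lev := Sum.elim A.lev B.lev

namespace Stmt4

open Classical in
/-- the restriction of `x` to level `o` (junk if `o > lev x`) -/
noncomputable def res {α : Type} (T : PreTree α) (o : Ordinal) (x : α) : α :=
  if h : ∃ y, T.lt y x ∧ T.lev y = o then h.choose else x

variable {α : Type} {T : PreTree α}

theorem le_trans' (hTr : T.IsTree) {x y z : α} (h1 : T.le x y) (h2 : T.le y z) : T.le x z := by
  rcases h1 with rfl | h1
  · exact h2
  · rcases h2 with rfl | h2
    · exact Or.inr h1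
    · exact Or.inr (hTr.1 _ _ _ h1 h2)

theorem eq_of_le_of_lev_eq (hTr : T.IsTree) {x y : α} (h : T.le x y)
    (hl : T.lev x = T.lev y) : x = y := by
  rcases h with rfl | h
  · rfl
  · exact absurd (hTr.2.1 _ _ h) (by rw [hl]; exact lt_irrefl _)

theorem res_spec (hTr : T.IsTree) {o : Ordinal} {x : α} (h : o < T.lev x) :
    T.lt (res T o x) x ∧ T.lev (res T o x) = o := by
  obtain ⟨y, hy, -⟩ := hTr.2.2.2 x o h
  have hex : ∃ y, T.lt y x ∧ T.lev y = o := ⟨y, hy⟩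
  rw [res, dif_pos hex]
  exact hex.choose_spec

theorem res_lev_self (hTr : T.IsTree) (x : α) : res T (T.lev x) x = x := by
  have hex : ¬ ∃ y, T.lt y x ∧ T.lev y = T.lev x := by
    rintro ⟨y, hy, hl⟩
    exact absurd (hTr.2.1 _ _ hy) (by rw [hl]; exact lt_irrefl _)
  rw [res, dif_neg hex]

theorem res_lev (hTr : T.IsTree) {o : Ordinal} {x : α} (h : o ≤ T.lev x) :
    T.lev (res T o x) = o := by
  rcases lt_or_eq_of_le h with h | rfl
  · exact (res_spec hTr h).2
  · rw [res_lev_self hTr]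

theorem res_le (hTr : T.IsTree) {o : Ordinal} {x : α} (h : o ≤ T.lev x) :
    T.le (res T o x) x := by
  rcases lt_or_eq_of_le h with h | rfl
  · exact Or.inr (res_spec hTr h).1
  · rw [res_lev_self hTr]
    exact Or.inl rfl

theorem res_unique (hTr : T.IsTree) {o : Ordinal} {x y : α} (h : T.le y x)
    (hl : T.lev y = o) : res T o x = y := by
  rcases h with rfl | h
  · subst hl; exact res_lev_self hTr y
  · have ho : o < T.lev x := hl ▸ hTr.2.1 _ _ h
    obtain ⟨z, hz, hu⟩ := hTr.2.2.2 x o ho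
    rw [hu _ (res_spec hTr ho), hu _ ⟨h, hl⟩]

theorem res_res (hTr : T.IsTree) {o o' : Ordinal} {x : α} (h : o ≤ o') (h' : o' ≤ T.lev x) :
    res T o (res T o' x) = res T o x := by
  have h0 : o ≤ T.lev (res T o' x) := by rw [res_lev hTr h']; exact h
  have h1 : T.le (res T o (res T o' x)) x :=
    le_trans' hTr (res_le hTr h0) (res_le hTr h')
  exact (res_unique hTr h1 (res_lev hTr h0)).symm

/-! ### omega1 lemmas -/

theorem zero_lt_omega1 : (0 : Ordinal) < omega1 := by
  have := nat_lt_omega1 0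
  simpa using this

theorem omega1_isLimit : Order.IsSuccLimit omega1 :=
  Cardinal.isSuccLimit_ord (Cardinal.aleph0_le_aleph 1)

theorem succ_lt_omega1 {o : Ordinal} (h : o < omega1) : o + 1 < omega1 := by
  rw [Ordinal.add_one_eq_succ]
  exact omega1_isLimit.succ_lt h

theorem card_le_aleph0_of_lt_omega1 {o : Ordinal} (h : o < omega1) : o.card ≤ Cardinal.aleph0 := by
  have := Cardinal.lt_ord.mp h
  rwa [← Cardinal.succ_aleph0, Order.lt_succ_iff] at this

theorem countable_Iio_of_lt_omega1 {o : Ordinal} (h : o < omega1) : (Set.Iio o).Countable := by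
  have h1 : #(Set.Iio o) ≤ Cardinal.aleph0 := by
    rw [Cardinal.mk_Iio_ordinal, Cardinal.lift_le_aleph0]; exact card_le_aleph0_of_lt_omega1 h
  haveI : Countable (Set.Iio o) := Cardinal.mk_le_aleph0_iff.mp h1
  exact Set.countable_coe_iff.mp this

theorem bdd_of_countable {S : Set Ordinal} (hc : S.Countable) (h : ∀ o ∈ S, o < omega1) :
    ∃ b, b < omega1 ∧ ∀ o ∈ S, o ≤ b := by
  rcases S.eq_empty_or_nonempty with rfl | hne
  · exact ⟨0, zero_lt_omega1, by simp⟩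
  · obtain ⟨f, rfl⟩ := hc.exists_eq_range hne
    refine ⟨⨆ n, f n, ?_, ?_⟩
    · have e : omega1 = Ordinal.omega 1 := by
        rw [omega1]; exact_mod_cast Cardinal.ord_aleph 1
      rw [e]
      exact Ordinal.iSup_lt_omega_one (fun n => e ▸ h _ ⟨n, rfl⟩)
    · rintro o ⟨n, rfl⟩
      exact Ordinal.le_iSup f n

theorem not_countable_Iio_omega1 : ¬ (Set.Iio omega1).Countable := by
  intro h
  obtain ⟨b, hb1, hb2⟩ := bdd_of_countable h (fun o ho => ho)
  exact absurd (hb2 (b+1) (succ_lt_omega1 hb1)) (by rw [Ordinal.add_one_eq_succ]; exact not_le.mpr (Order.lt_succ b))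

/-- pigeonhole: a function into a countable set has some value attained unboundedly -/
theorem unbounded_fiber {β' : Type*} {W : Set β'} (hW : W.Countable) {lo : Ordinal}
    (hlo : lo < omega1) (g : Ordinal → β') (hg : ∀ γ, lo ≤ γ → γ < omega1 → g γ ∈ W) :
    ∃ v ∈ W, ∀ b, b < omega1 → ∃ γ, lo ≤ γ ∧ b ≤ γ ∧ γ < omega1 ∧ g γ = v := by
  by_contra hcon
  push_neg at hcon
  have hcon' : ∀ v : ↥W, ∃ b, b < omega1 ∧ ∀ γ, lo ≤ γ → b ≤ γ → γ < omega1 → g γ ≠ v :=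
    fun v => hcon v v.2
  choose B hB1 hB2 using hcon'
  haveI := hW.to_subtype
  obtain ⟨b, hb1, hb2⟩ := bdd_of_countable (Set.countable_range B)
    (by rintro _ ⟨v, rfl⟩; exact hB1 v)
  set γ := max lo b with hγ
  have hγ2 : γ < omega1 := max_lt hlo hb1
  have hv : g γ ∈ W := hg γ (le_max_left _ _) hγ2
  exact hB2 ⟨g γ, hv⟩ γ (le_max_left _ _)
    (le_trans (hb2 _ ⟨⟨g γ, hv⟩, rfl⟩) (le_max_right _ _)) hγ2 rfl

/-- a monotone ℕ-valued function on `[base, ω₁)` is eventually constant -/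
theorem mono_eventually_const (f : Ordinal → ℕ) {base : Ordinal} (hbase : base < omega1)
    (mono : ∀ γ γ', base ≤ γ → γ ≤ γ' → γ' < omega1 → f γ ≤ f γ') :
    ∃ b, base ≤ b ∧ b < omega1 ∧ ∀ γ, b ≤ γ → γ < omega1 → f γ = f b := by
  have hbdd : ∃ m, ∀ γ, base ≤ γ → γ < omega1 → f γ ≤ m := by
    by_contra hc
    push_neg at hc
    choose gf h1 h2 h3 using hc
    obtain ⟨b, hb1, hb2⟩ := bdd_of_countable (Set.countable_range gf)
      (by rintro _ ⟨m, rfl⟩; exact h2 m)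
    set γ := max base (b+1) with hγ
    have hγ1 : base ≤ γ := le_max_left _ _
    have hγ2 : γ < omega1 := max_lt hbase (succ_lt_omega1 hb1)
    have hall : ∀ m, m < f γ := by
      intro m
      refine lt_of_lt_of_le (h3 m) (mono _ _ (h1 m) ?_ hγ2)
      exact le_trans (le_trans (hb2 _ ⟨m, rfl⟩) (le_self_add)) (le_max_right _ _)
    exact absurd (hall (f γ)) (lt_irrefl _)
  obtain ⟨m, hm⟩ := hbdd
  set V : Set ℕ := {v | ∃ γ, base ≤ γ ∧ γ < omega1 ∧ f γ = v} with hV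
  have hVne : V.Nonempty := ⟨f base, base, le_refl _, hbase, rfl⟩
  have hVbdd : BddAbove V := ⟨m, by rintro v ⟨γ, h1, h2, rfl⟩; exact hm γ h1 h2⟩
  obtain ⟨γ₀, hγ₀1, hγ₀2, hγ₀3⟩ := Nat.sSup_mem hVne hVbdd
  refine ⟨γ₀, hγ₀1, hγ₀2, fun γ hγ1 hγ2 => le_antisymm ?_ ?_⟩
  · rw [hγ₀3]; exact le_csSup hVbdd ⟨γ, le_trans hγ₀1 hγ1, hγ2, rfl⟩
  · exact mono _ _ hγ₀1 hγ1 hγ2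

/-! ### finite combinatorics -/

theorem min_transversal_finite {β' : Type*} :
    ∀ (k : ℕ) (F : Set (Finset β')),
      (∀ t : Finset β', (∀ s ∈ F, ∃ a ∈ s, a ∈ t) → k ≤ t.card) →
      {t : Finset β' | (∀ s ∈ F, ∃ a ∈ s, a ∈ t) ∧ t.card = k}.Finite := by
  classical
  intro k
  induction k with
  | zero =>
    intro F hmin
    refine Set.Finite.subset (Set.finite_singleton ∅) ?_
    rintro t ⟨-, hc⟩
    simp [Finset.card_eq_zero.mp hc]
  | succ k ih =>
    intro F hmin
    rcases Set.eq_empty_or_nonempty F with rfl | ⟨s₀, hs₀⟩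
    · exact absurd (hmin ∅ (by simp)) (by simp)
    · have hsub : {t : Finset β' | (∀ s ∈ F, ∃ a ∈ s, a ∈ t) ∧ t.card = k+1} ⊆
          ⋃ z ∈ s₀, (insert z) ''
            {t : Finset β' | (∀ s ∈ {s ∈ F | z ∉ s}, ∃ a ∈ s, a ∈ t) ∧ t.card = k} := by
        rintro t ⟨htr, hc⟩
        obtain ⟨z, hz1, hz2⟩ := htr s₀ hs₀
        refine Set.mem_biUnion hz1 ⟨t.erase z, ⟨?_, ?_⟩, ?_⟩
        · rintro s ⟨hs, hzs⟩
          obtain ⟨a, ha1, ha2⟩ := htr s hs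
          exact ⟨a, ha1, Finset.mem_erase.mpr ⟨by rintro rfl; exact hzs ha1, ha2⟩⟩
        · rw [Finset.card_erase_of_mem hz2, hc]; omega
        · exact Finset.insert_erase hz2
      refine Set.Finite.subset ?_ hsub
      refine Set.Finite.biUnion s₀.finite_toSet ?_
      intro z _
      refine Set.Finite.image _ (ih _ ?_)
      intro u hu
      have h1 : k + 1 ≤ (insert z u).card := by
        refine hmin _ ?_
        intro s hs
        by_cases hzs : z ∈ s
        · exact ⟨z, hzs, Finset.mem_insert_self _ _⟩
        · obtain ⟨a, ha1, ha2⟩ := hu s ⟨hs, hzs⟩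
          exact ⟨a, ha1, Finset.mem_insert_of_mem ha2⟩
      have h2 : (insert z u).card ≤ u.card + 1 := Finset.card_insert_le _ _
      omega

theorem ncard_le_of_subset_image {β' γ' : Type*} {f : β' → γ'} {s : Set β'} {t : Set γ'}
    (hsub : t ⊆ f '' s) (hs : s.Finite) : t.ncard ≤ s.ncard :=
  le_trans (Set.ncard_le_ncard hsub (hs.image f)) (Set.ncard_image_le hs)

theorem injOn_of_surjOn_ncard {β' γ' : Type*} {f : β' → γ'} {s : Set β'} {t : Set γ'}
    (hsurj : t ⊆ f '' s) (hs : s.Finite) (hcard : s.ncard ≤ t.ncard) :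
    Set.InjOn f s := by
  intro a ha b hb hab
  by_contra hne
  have hsurj2 : t ⊆ f '' (s \ {b}) := by
    intro c hc
    obtain ⟨x, hx, rfl⟩ := hsurj hc
    by_cases hxb : x = b
    · exact ⟨a, ⟨ha, by simp [hne]⟩, by rw [hab, hxb]⟩
    · exact ⟨x, ⟨hx, by simp [hxb]⟩, rfl⟩
  have h1 : t.ncard ≤ (s \ {b}).ncard :=
    ncard_le_of_subset_image hsurj2 (hs.subset Set.diff_subset)
  have h2 : (s \ {b}).ncard < s.ncard := Set.ncard_diff_singleton_lt_of_mem hb hs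
  omega

/-! ### persistent tuples -/

section Main

variable {α : Type} {T : PreTree α} {n : ℕ} {X : Set (Fin (n+1) → α)}

/-- a tuple is persistent if it lies in `X` and has extensions in `X` at every
higher level below `ω₁` -/
def PersF (T : PreTree α) (n : ℕ) (X : Set (Fin (n+1) → α)) (x : Fin (n+1) → α) : Prop :=
  x ∈ X ∧ ∀ γ, T.lev (x 0) ≤ γ → γ < omega1 →
    ∃ y ∈ X, (∀ i, T.lev (y i) = γ) ∧ ∀ i, T.le (x i) (y i)

theorem levX (hXlev : ∀ x ∈ X, ∃ o, ∀ i, T.lev (x i) = o) {x : Fin (n+1) → α} (hx : x ∈ X) :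
    ∀ i, T.lev (x i) = T.lev (x 0) := by
  obtain ⟨o, ho⟩ := hXlev x hx
  intro i; rw [ho i, ho 0]

theorem countable_level_tuples (hT : T.Aronszajn) {γ : Ordinal} (hγ : γ < omega1) :
    {x : Fin (n+1) → α | ∀ i, T.lev (x i) = γ}.Countable := by
  haveI := (hT.1.2.2.1 γ hγ).to_subtype
  rw [← Set.countable_coe_iff]
  refine Function.Injective.countable
    (f := fun x => (fun i => (⟨x.1 i, x.2 i⟩ : {z | T.lev z = γ}))) ?_
  intro x y h
  apply Subtype.ext; funext i
  exact congrArg Subtype.val (congrFun h i)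

theorem X_unbounded_levels (hT : T.Aronszajn) (hXlev : ∀ x ∈ X, ∃ o, ∀ i, T.lev (x i) = o)
    (hXunc : ¬ X.Countable) {b : Ordinal} (hb : b < omega1) :
    ∃ x ∈ X, b ≤ T.lev (x 0) := by
  by_contra hcon
  push_neg at hcon
  apply hXunc
  have hsub : X ⊆ ⋃ γ ∈ Set.Iio b, {x : Fin (n+1) → α | ∀ i, T.lev (x i) = γ} := by
    intro x hx
    exact Set.mem_biUnion (hcon x hx) (levX hXlev hx)
  refine Set.Countable.mono hsub ?_
  exact Set.Countable.biUnion (countable_Iio_of_lt_omega1 hb)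
    (fun γ hγ => countable_level_tuples hT (lt_trans hγ hb))

theorem X_nonempty_level (hT : T.Aronszajn) (hXlev : ∀ x ∈ X, ∃ o, ∀ i, T.lev (x i) = o)
    (hXunc : ¬ X.Countable)
    (hXdc : ∀ x ∈ X, ∀ y : Fin (n+1) → α, (∃ o, ∀ i, T.lev (y i) = o) →
      (∀ i, T.le (y i) (x i)) → y ∈ X)
    {γ : Ordinal} (hγ : γ < omega1) :
    ∃ x ∈ X, ∀ i, T.lev (x i) = γ := by
  have hTr : T.IsTree := hT.1.1
  obtain ⟨x, hx, hlev⟩ := X_unbounded_levels hT hXlev hXunc hγ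
  have hγi : ∀ i, γ ≤ T.lev (x i) := fun i => (levX hXlev hx i).symm ▸ hlev
  refine ⟨fun i => res T γ (x i), ?_, fun i => res_lev hTr (hγi i)⟩
  exact hXdc x hx _ ⟨γ, fun i => res_lev hTr (hγi i)⟩ (fun i => res_le hTr (hγi i))

theorem PersF_res (hT : T.Aronszajn) (hXlev : ∀ x ∈ X, ∃ o, ∀ i, T.lev (x i) = o)
    (hXdc : ∀ x ∈ X, ∀ y : Fin (n+1) → α, (∃ o, ∀ i, T.lev (y i) = o) →
      (∀ i, T.le (y i) (x i)) → y ∈ X)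
    {x : Fin (n+1) → α} (hx : PersF T n X x) {γ : Ordinal} (hγ : γ ≤ T.lev (x 0)) :
    PersF T n X (fun i => res T γ (x i)) ∧ ∀ i, T.lev (res T γ (x i)) = γ := by
  have hTr : T.IsTree := hT.1.1
  have hγi : ∀ i, γ ≤ T.lev (x i) := fun i => (levX hXlev hx.1 i).symm ▸ hγ
  have hlev : ∀ i, T.lev (res T γ (x i)) = γ := fun i => res_lev hTr (hγi i)
  have hmem : (fun i => res T γ (x i)) ∈ X :=
    hXdc x hx.1 _ ⟨γ, hlev⟩ (fun i => res_le hTr (hγi i))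
  refine ⟨⟨hmem, ?_⟩, hlev⟩
  intro δ hδ1 hδ2
  simp only [hlev 0] at hδ1
  rcases le_or_gt δ (T.lev (x 0)) with hcase | hcase
  · have hδi : ∀ i, δ ≤ T.lev (x i) := fun i => (levX hXlev hx.1 i).symm ▸ hcase
    refine ⟨fun i => res T δ (x i),
      hXdc x hx.1 _ ⟨δ, fun i => res_lev hTr (hδi i)⟩ (fun i => res_le hTr (hδi i)),
      fun i => res_lev hTr (hδi i), fun i => ?_⟩
    show T.le (res T γ (x i)) (res T δ (x i))
    have := res_res hTr hδ1 (hδi i)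
    rw [← this]
    exact res_le hTr (by rw [res_lev hTr (hδi i)]; exact hδ1)
  · obtain ⟨y, hy1, hy2, hy3⟩ := hx.2 δ (le_of_lt hcase) hδ2
    exact ⟨y, hy1, hy2, fun i => le_trans' hTr (res_le hTr (hγi i)) (hy3 i)⟩

theorem PersF_extend (hT : T.Aronszajn) (hXlev : ∀ x ∈ X, ∃ o, ∀ i, T.lev (x i) = o)
    (hXdc : ∀ x ∈ X, ∀ y : Fin (n+1) → α, (∃ o, ∀ i, T.lev (y i) = o) →
      (∀ i, T.le (y i) (x i)) → y ∈ X)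
    {x : Fin (n+1) → α} (hx : PersF T n X x) {γ₁ : Ordinal} (h1 : T.lev (x 0) ≤ γ₁)
    (h2 : γ₁ < omega1) :
    ∃ y, PersF T n X y ∧ (∀ i, T.lev (y i) = γ₁) ∧ ∀ i, T.le (x i) (y i) := by
  have hTr : T.IsTree := hT.1.1
  set γ₀ := T.lev (x 0) with hγ₀
  set E := {y | y ∈ X ∧ (∀ i, T.lev (y i) = γ₁) ∧ ∀ i, T.le (x i) (y i)} with hE
  by_cases hcase : ∃ y ∈ E, PersF T n X y
  · obtain ⟨y, hy, hyP⟩ := hcase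
    exact ⟨y, hyP, hy.2.1, hy.2.2⟩
  push_neg at hcase
  exfalso
  have hEc : E.Countable :=
    Set.Countable.mono (fun y hy => hy.2.1) (countable_level_tuples hT h2)
  have hbad : ∀ y : ↥E, ∃ δ, γ₁ ≤ δ ∧ δ < omega1 ∧
      ∀ z ∈ X, (∀ i, T.lev (z i) = δ) → ∃ i, ¬ T.le (y.1 i) (z i) := by
    rintro ⟨y, hy⟩
    have := hcase y hy
    rw [PersF] at this
    push_neg at this
    obtain ⟨δ, hδ1, hδ2, hδ3⟩ := this hy.1
    refine ⟨δ, ?_, hδ2, fun z hz hzl => ?_⟩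
    · rw [hy.2.1 0] at hδ1; exact hδ1
    · obtain ⟨i, hi⟩ := hδ3 z hz hzl
      exact ⟨i, hi⟩
  choose D hD1 hD2 hD3 using hbad
  haveI := hEc.to_subtype
  obtain ⟨b, hb1, hb2⟩ := bdd_of_countable (Set.countable_range D)
    (by rintro _ ⟨y, rfl⟩; exact hD2 y)
  set δs := max b γ₁ + 1 with hδs
  have hδs1 : δs < omega1 := succ_lt_omega1 (max_lt hb1 h2)
  have hδs2 : γ₁ ≤ δs := le_trans (le_max_right _ _) le_self_add
  obtain ⟨z, hz1, hz2, hz3⟩ := hx.2 δs (le_trans h1 hδs2) hδs1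
  have hzi : ∀ i, γ₁ ≤ T.lev (z i) := fun i => (hz2 i).symm ▸ hδs2
  set y₀ : Fin (n+1) → α := fun i => res T γ₁ (z i) with hy₀
  have hy₀lev : ∀ i, T.lev (y₀ i) = γ₁ := fun i => res_lev hTr (hzi i)
  have hy₀mem : y₀ ∈ X := hXdc z hz1 _ ⟨γ₁, hy₀lev⟩ (fun i => res_le hTr (hzi i))
  have hy₀ext : ∀ i, T.le (x i) (y₀ i) := by
    intro i
    have hx_eq : res T γ₀ (z i) = x i :=
      res_unique hTr (hz3 i) (levX hXlev hx.1 i)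
    have : res T γ₀ (res T γ₁ (z i)) = res T γ₀ (z i) :=
      res_res hTr h1 ((hz2 i).symm ▸ hδs2)
    rw [← hx_eq, ← this]
    exact res_le hTr (by rw [hy₀lev i]; exact h1)
  have hy₀E : y₀ ∈ E := ⟨hy₀mem, hy₀lev, hy₀ext⟩
  set yy : ↥E := ⟨y₀, hy₀E⟩ with hyy
  have hδ₀ : D yy ≤ b := hb2 _ ⟨yy, rfl⟩
  have hmaxlt : max b γ₁ < δs := by
    rw [hδs, Ordinal.add_one_eq_succ]; exact Order.lt_succ _
  have hδ₀lt : D yy < δs := lt_of_le_of_lt (le_trans hδ₀ (le_max_left _ _)) hmaxlt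
  have hδ₀le : D yy ≤ δs := le_of_lt hδ₀lt
  have hzi' : ∀ i, D yy ≤ T.lev (z i) := fun i => (hz2 i).symm ▸ hδ₀le
  set w : Fin (n+1) → α := fun i => res T (D yy) (z i) with hw
  have hwlev : ∀ i, T.lev (w i) = D yy := fun i => res_lev hTr (hzi' i)
  have hwmem : w ∈ X := hXdc z hz1 _ ⟨D yy, hwlev⟩ (fun i => res_le hTr (hzi' i))
  obtain ⟨i, hi⟩ := hD3 yy w hwmem hwlev
  apply hi
  show T.le (res T γ₁ (z i)) (res T (D yy) (z i))
  have heq : res T γ₁ (res T (D yy) (z i)) = res T γ₁ (z i) :=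
    res_res hTr (hD1 yy) (hzi' i)
  rw [← heq]
  refine res_le hTr ?_
  rw [res_lev hTr (hzi' i)]
  exact hD1 yy

theorem PersF_exists (hT : T.Aronszajn) (hXlev : ∀ x ∈ X, ∃ o, ∀ i, T.lev (x i) = o)
    (hXunc : ¬ X.Countable)
    (hXdc : ∀ x ∈ X, ∀ y : Fin (n+1) → α, (∃ o, ∀ i, T.lev (y i) = o) →
      (∀ i, T.le (y i) (x i)) → y ∈ X)
    {γ : Ordinal} (hγ : γ < omega1) :
    ∃ x, PersF T n X x ∧ ∀ i, T.lev (x i) = γ := by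
  have hTr : T.IsTree := hT.1.1
  obtain ⟨z0, hz0⟩ := hT.1.2.2.2.1 0 zero_lt_omega1
  have h4 : ∀ δ : Ordinal, ∃ x : Fin (n+1) → α, δ < omega1 →
      x ∈ X ∧ ∀ i, T.lev (x i) = δ := by
    intro δ
    by_cases h : δ < omega1
    · obtain ⟨x, hx1, hx2⟩ := X_nonempty_level hT hXlev hXunc hXdc h
      exact ⟨x, fun _ => ⟨hx1, hx2⟩⟩
    · exact ⟨fun _ => z0, fun hh => absurd hh h⟩
  choose xc hxc using h4
  set g : Ordinal → (Fin (n+1) → α) := fun δ => fun i => res T γ (xc δ i) with hg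
  set W := {x : Fin (n+1) → α | x ∈ X ∧ ∀ i, T.lev (x i) = γ} with hW
  have hWc : W.Countable :=
    Set.Countable.mono (fun y hy => hy.2) (countable_level_tuples hT hγ)
  have hgW : ∀ δ, γ ≤ δ → δ < omega1 → g δ ∈ W := by
    intro δ h1 h2
    obtain ⟨hx1, hx2⟩ := hxc δ h2
    have hγi : ∀ i, γ ≤ T.lev (xc δ i) := fun i => (hx2 i).symm ▸ h1
    exact ⟨hXdc _ hx1 _ ⟨γ, fun i => res_lev hTr (hγi i)⟩ (fun i => res_le hTr (hγi i)),
      fun i => res_lev hTr (hγi i)⟩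
  obtain ⟨v, hv, hfib⟩ := unbounded_fiber hWc hγ g hgW
  refine ⟨v, ⟨hv.1, ?_⟩, hv.2⟩
  intro δ hδ1 hδ2
  rw [hv.2 0] at hδ1
  obtain ⟨γ', h1, h2, h3, h4'⟩ := hfib δ hδ2
  obtain ⟨hm, hl⟩ := hxc γ' h3
  have hδi : ∀ i, δ ≤ T.lev (xc γ' i) := fun i => (hl i).symm ▸ h2
  refine ⟨fun i => res T δ (xc γ' i),
    hXdc _ hm _ ⟨δ, fun i => res_lev hTr (hδi i)⟩ (fun i => res_le hTr (hδi i)),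
    fun i => res_lev hTr (hδi i), fun i => ?_⟩
  have hveq : v i = res T γ (xc γ' i) := by rw [← h4']
  have heq : res T γ (res T δ (xc γ' i)) = res T γ (xc γ' i) :=
    res_res hTr hδ1 (hδi i)
  rw [hveq, ← heq]
  refine res_le hTr ?_
  rw [res_lev hTr (hδi i)]
  exact hδ1

theorem PersF_uncountable (hT : T.Aronszajn) (hXlev : ∀ x ∈ X, ∃ o, ∀ i, T.lev (x i) = o)
    (hXunc : ¬ X.Countable)
    (hXdc : ∀ x ∈ X, ∀ y : Fin (n+1) → α, (∃ o, ∀ i, T.lev (y i) = o) →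
      (∀ i, T.le (y i) (x i)) → y ∈ X) :
    ¬ {x | PersF T n X x}.Countable := by
  intro h
  obtain ⟨b, hb1, hb2⟩ := bdd_of_countable (Set.Countable.image h (fun x => T.lev (x 0)))
    (by rintro _ ⟨x, hx, rfl⟩; exact hT.1.2.1 _)
  obtain ⟨x, hx1, hx2⟩ := PersF_exists hT hXlev hXunc hXdc (succ_lt_omega1 hb1)
  have : b + 1 ≤ b := by
    have := hb2 (T.lev (x 0)) ⟨x, hx1, rfl⟩
    rwa [hx2 0] at this
  rw [Ordinal.add_one_eq_succ] at this
  exact absurd this (not_le.mpr (Order.lt_succ _))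

/-- `t` is a blocking set at level `γ`: every persistent tuple of level `γ`
has a coordinate in `t` -/
def Blk (T : PreTree α) (n : ℕ) (X : Set (Fin (n+1) → α)) (γ : Ordinal) (t : Finset α) : Prop :=
  ∀ x, PersF T n X x → (∀ i, T.lev (x i) = γ) → ∃ i, x i ∈ t

open Classical in
theorem blk_proj (hT : T.Aronszajn) (hXlev : ∀ x ∈ X, ∃ o, ∀ i, T.lev (x i) = o)
    (hXdc : ∀ x ∈ X, ∀ y : Fin (n+1) → α, (∃ o, ∀ i, T.lev (y i) = o) →
      (∀ i, T.le (y i) (x i)) → y ∈ X)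
    {γ γ' : Ordinal} {t' : Finset α} (h1 : γ ≤ γ') (h2 : γ' < omega1)
    (hb : Blk T n X γ' t') :
    Blk T n X γ (t'.image (res T γ)) := by
  have hTr : T.IsTree := hT.1.1
  intro x hx hlev
  obtain ⟨y, hy1, hy2, hy3⟩ := PersF_extend hT hXlev hXdc hx (by rw [hlev 0]; exact h1) h2
  obtain ⟨i, hi⟩ := hb y hy1 hy2
  refine ⟨i, Finset.mem_image.mpr ⟨y i, hi, ?_⟩⟩
  exact res_unique hTr (hy3 i) (hlev i)

open Classical in
/-- projection of a finite set to level `γ` -/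
noncomputable def prF (T : PreTree α) (γ : Ordinal) (t : Finset α) : Finset α :=
  t.image (res T γ)

open Classical in
theorem prF_trans (hTr : T.IsTree) {γ γ'' : Ordinal} {t' : Finset α} (h1 : γ ≤ γ'')
    (hlev : ∀ z ∈ t', γ'' ≤ T.lev z) : prF T γ (prF T γ'' t') = prF T γ t' := by
  unfold prF
  rw [Finset.image_image]
  exact Finset.image_congr (fun z hz => res_res hTr h1 (hlev z hz))

open Classical in
theorem caseB (hT : T.Aronszajn) (hXlev : ∀ x ∈ X, ∃ o, ∀ i, T.lev (x i) = o)
    (hXunc : ¬ X.Countable)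
    (hXdc : ∀ x ∈ X, ∀ y : Fin (n+1) → α, (∃ o, ∀ i, T.lev (y i) = o) →
      (∀ i, T.le (y i) (x i)) → y ∈ X)
    (hbad : ∀ γ, γ < omega1 → ∃ t : Finset α, Blk T n X γ t) : False := by
  classical
  have hTr : T.IsTree := hT.1.1
  -- minimal size of a blocking set
  set kk : Ordinal → ℕ := fun γ => sInf {m | ∃ t : Finset α, Blk T n X γ t ∧ t.card = m}
    with hkk
  have hkkmem : ∀ γ, γ < omega1 → ∃ t : Finset α, Blk T n X γ t ∧ t.card = kk γ := by
    intro γ hγ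
    obtain ⟨t, ht⟩ := hbad γ hγ
    obtain ⟨t', ht'⟩ := Nat.sInf_mem (s := {m | ∃ t : Finset α, Blk T n X γ t ∧ t.card = m})
      ⟨t.card, t, ht, rfl⟩
    exact ⟨t', ht'.1, ht'.2⟩
  have hkkle : ∀ γ (t : Finset α), Blk T n X γ t → kk γ ≤ t.card := by
    intro γ t ht
    exact Nat.sInf_le ⟨t, ht, rfl⟩
  have hkmono : ∀ γ γ', 0 ≤ γ → γ ≤ γ' → γ' < omega1 → kk γ ≤ kk γ' := by
    intro γ γ' _ h1 h2
    obtain ⟨t', ht'1, ht'2⟩ := hkkmem γ' h2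
    calc kk γ ≤ (t'.image (res T γ)).card := hkkle _ _ (blk_proj hT hXlev hXdc h1 h2 ht'1)
    _ ≤ t'.card := Finset.card_image_le
    _ = kk γ' := ht'2
  obtain ⟨β₁, -, hβ₁lt, hKconst⟩ := mono_eventually_const kk zero_lt_omega1 hkmono
  set K := kk β₁ with hKdef
  -- K ≥ 1
  have hK1 : 0 < K := by
    rcases Nat.eq_zero_or_pos K with h | h
    swap
    · exact h
    exfalso
    obtain ⟨t, ht1, ht2⟩ := hkkmem β₁ hβ₁lt
    rw [← hKdef, h, Finset.card_eq_zero] at ht2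
    obtain ⟨x, hx1, hx2⟩ := PersF_exists hT hXlev hXunc hXdc hβ₁lt
    obtain ⟨i, hi⟩ := ht1 x hx1 hx2
    rw [ht2] at hi
    exact absurd hi (Finset.notMem_empty _)
  -- minimum-size blocking sets
  set MinB : Ordinal → Set (Finset α) := fun γ => {t | Blk T n X γ t ∧ t.card = K}
    with hMinB
  have hkkK : ∀ γ, β₁ ≤ γ → γ < omega1 → kk γ = K := fun γ h1 h2 => hKconst γ h1 h2
  have hMinBne : ∀ γ, β₁ ≤ γ → γ < omega1 → ∃ t, t ∈ MinB γ := by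
    intro γ h1 h2
    obtain ⟨t, ht1, ht2⟩ := hkkmem γ h2
    exact ⟨t, ht1, by rw [ht2]; exact hkkK γ h1 h2⟩
  have hMinBfin : ∀ γ, β₁ ≤ γ → γ < omega1 → (MinB γ).Finite := by
    intro γ h1 h2
    set F : Set (Finset α) :=
      {s | ∃ x, PersF T n X x ∧ (∀ i, T.lev (x i) = γ) ∧ s = Finset.image x Finset.univ}
      with hF
    have hiff : ∀ t : Finset α, (∀ s ∈ F, ∃ a ∈ s, a ∈ t) ↔ Blk T n X γ t := by
      intro t
      constructor
      · rintro h x hx hl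
        obtain ⟨a, ha1, ha2⟩ := h _ ⟨x, hx, hl, rfl⟩
        obtain ⟨i, -, rfl⟩ := Finset.mem_image.mp ha1
        exact ⟨i, ha2⟩
      · rintro h s ⟨x, hx, hl, rfl⟩
        obtain ⟨i, hi⟩ := h x hx hl
        exact ⟨x i, Finset.mem_image.mpr ⟨i, Finset.mem_univ _, rfl⟩, hi⟩
    have := min_transversal_finite K F (fun t ht => by
      rw [← hkkK γ h1 h2]; exact hkkle _ _ ((hiff t).mp ht))
    refine this.subset ?_
    rintro t ⟨ht1, ht2⟩
    exact ⟨(hiff t).mpr ht1, ht2⟩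
  -- elements of min blocking sets have level γ
  have hMinBlev : ∀ γ, β₁ ≤ γ → γ < omega1 → ∀ t ∈ MinB γ, ∀ z ∈ t, T.lev z = γ := by
    rintro γ h1 h2 t ⟨htb, htc⟩ z hz
    have herase : ¬ Blk T n X γ (t.erase z) := by
      intro hb
      have := hkkle _ _ hb
      rw [Finset.card_erase_of_mem hz, htc, hkkK γ h1 h2] at this
      omega
    rw [Blk] at herase
    push_neg at herase
    obtain ⟨x, hx1, hx2, hx3⟩ := herase
    obtain ⟨i, hi⟩ := htb x hx1 hx2
    have : x i = z := by
      by_contra hne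
      exact hx3 i (Finset.mem_erase.mpr ⟨hne, hi⟩)
    rw [← this]
    exact hx2 i
  -- projections of min blocking sets are min blocking
  have hpr_minb : ∀ γ γ', β₁ ≤ γ → γ ≤ γ' → γ' < omega1 →
      ∀ t' ∈ MinB γ', prF T γ t' ∈ MinB γ := by
    rintro γ γ' h1 h2 h3 t' ⟨ht1, ht2⟩
    have hblk : Blk T n X γ (prF T γ t') := blk_proj hT hXlev hXdc h2 h3 ht1
    refine ⟨hblk, le_antisymm ?_ ?_⟩
    · calc (prF T γ t').card ≤ t'.card := Finset.card_image_le
      _ = K := ht2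
    · rw [← hkkK γ h1 (lt_of_le_of_lt h2 h3)]
      exact hkkle _ _ hblk
  have hpr_tr : ∀ γ γ'' γ', β₁ ≤ γ → γ ≤ γ'' → γ'' ≤ γ' → γ' < omega1 →
      ∀ t' ∈ MinB γ', prF T γ (prF T γ'' t') = prF T γ t' := by
    intro γ γ'' γ' h1 h2 h3 h4 t' ht'
    exact prF_trans hTr h2 (fun z hz => by
      rw [hMinBlev γ' (le_trans h1 (le_trans h2 h3)) h4 t' ht' z hz]; exact h3)
  -- a choice of min blocking sets
  have htc0 : ∀ γ', ∃ t : Finset α, β₁ ≤ γ' → γ' < omega1 → t ∈ MinB γ' := by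
    intro γ'
    by_cases h : β₁ ≤ γ' ∧ γ' < omega1
    · obtain ⟨t, ht⟩ := hMinBne γ' h.1 h.2
      exact ⟨t, fun _ _ => ht⟩
    · exact ⟨∅, fun h1 h2 => absurd ⟨h1, h2⟩ h⟩
  choose tc htc using htc0
  -- persistent min blocking sets
  set PB : Ordinal → Set (Finset α) := fun γ =>
    {t | t ∈ MinB γ ∧ ∀ γ', γ ≤ γ' → γ' < omega1 → ∃ t' ∈ MinB γ', prF T γ t' = t}
    with hPB
  have hPBfin : ∀ γ, β₁ ≤ γ → γ < omega1 → (PB γ).Finite :=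
    fun γ h1 h2 => (hMinBfin γ h1 h2).subset (fun t ht => ht.1)
  have hPBne : ∀ γ, β₁ ≤ γ → γ < omega1 → ∃ t, t ∈ PB γ := by
    intro γ h1 h2
    obtain ⟨t, htW, hfib⟩ := unbounded_fiber (W := MinB γ) (hMinBfin γ h1 h2).countable h2
      (fun γ' => prF T γ (tc γ'))
      (fun γ' hg1 hg2 => hpr_minb γ γ' h1 hg1 hg2 _ (htc γ' (le_trans h1 hg1) hg2))
    refine ⟨t, htW, ?_⟩
    intro γ'' hg1 hg2
    obtain ⟨γ', h5, h6, h7, h8⟩ := hfib γ'' hg2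
    have htcm : tc γ' ∈ MinB γ' := htc γ' (le_trans h1 h5) h7
    refine ⟨prF T γ'' (tc γ'), hpr_minb γ'' γ' (le_trans h1 hg1) h6 h7 _ htcm, ?_⟩
    rw [hpr_tr γ γ'' γ' h1 hg1 h6 h7 _ htcm]
    exact h8
  have hPBlift : ∀ γ γ'', β₁ ≤ γ → γ ≤ γ'' → γ'' < omega1 →
      ∀ t ∈ PB γ, ∃ t' ∈ PB γ'', prF T γ t' = t := by
    rintro γ γ'' h1 h2 h3 t ⟨htm, htp⟩
    have hsc0 : ∀ δ, ∃ s : Finset α, γ'' ≤ δ → δ < omega1 →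
        s ∈ MinB δ ∧ prF T γ s = t := by
      intro δ
      by_cases h : γ'' ≤ δ ∧ δ < omega1
      · obtain ⟨s, hs1, hs2⟩ := htp δ (le_trans h2 h.1) h.2
        exact ⟨s, fun _ _ => ⟨hs1, hs2⟩⟩
      · exact ⟨∅, fun ha hb => absurd ⟨ha, hb⟩ h⟩
    choose sc hsc using hsc0
    set W : Set (Finset α) := {u | u ∈ MinB γ'' ∧ prF T γ u = t} with hWdef
    have hWc : W.Countable :=
      ((hMinBfin γ'' (le_trans h1 h2) h3).subset (fun u hu => hu.1)).countable
    have hgW : ∀ δ, γ'' ≤ δ → δ < omega1 → prF T γ'' (sc δ) ∈ W := by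
      intro δ hd1 hd2
      obtain ⟨hs1, hs2⟩ := hsc δ hd1 hd2
      refine ⟨hpr_minb γ'' δ (le_trans h1 h2) hd1 hd2 _ hs1, ?_⟩
      rw [hpr_tr γ γ'' δ h1 h2 hd1 hd2 _ hs1]
      exact hs2
    obtain ⟨t', ht'W, hfib⟩ := unbounded_fiber hWc h3 (fun δ => prF T γ'' (sc δ)) hgW
    refine ⟨t', ⟨ht'W.1, ?_⟩, ht'W.2⟩
    intro δ' hd1 hd2
    obtain ⟨δ, h5, h6, h7, h8⟩ := hfib δ' hd2
    obtain ⟨hs1, -⟩ := hsc δ h5 h7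
    refine ⟨prF T δ' (sc δ), hpr_minb δ' δ (le_trans (le_trans h1 h2) hd1) h6 h7 _ hs1, ?_⟩
    rw [hpr_tr γ'' δ' δ (le_trans h1 h2) hd1 h6 h7 _ hs1]
    exact h8
  have hPBproj : ∀ γ γ', β₁ ≤ γ → γ ≤ γ' → γ' < omega1 →
      ∀ t' ∈ PB γ', prF T γ t' ∈ PB γ := by
    rintro γ γ' h1 h2 h3 t' ⟨htm, htp⟩
    refine ⟨hpr_minb γ γ' h1 h2 h3 _ htm, ?_⟩
    intro γ'' hg1 hg2
    rcases le_or_gt γ' γ'' with hc | hc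
    · obtain ⟨s, hs1, hs2⟩ := htp γ'' hc hg2
      refine ⟨s, hs1, ?_⟩
      have : prF T γ (prF T γ' s) = prF T γ s := hpr_tr γ γ' γ'' h1 h2 hc hg2 _ hs1
      rw [← hs2, this]
    · refine ⟨prF T γ'' t', hpr_minb γ'' γ' (le_trans h1 hg1) (le_of_lt hc) h3 _ htm, ?_⟩
      exact hpr_tr γ γ'' γ' h1 hg1 (le_of_lt hc) h3 _ htm
  -- stabilize the number of persistent min blocking sets
  have hncmono : ∀ γ γ', β₁ ≤ γ → γ ≤ γ' → γ' < omega1 → (PB γ).ncard ≤ (PB γ').ncard := by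
    intro γ γ' h1 h2 h3
    refine ncard_le_of_subset_image (f := prF T γ) ?_ (hPBfin γ' (le_trans h1 h2) h3)
    intro t ht
    obtain ⟨t', ht'1, ht'2⟩ := hPBlift γ γ' h1 h2 h3 t ht
    exact ⟨t', ht'1, ht'2⟩
  obtain ⟨β₂, hβ₂1, hβ₂2, hMconst⟩ :=
    mono_eventually_const (fun γ => (PB γ).ncard) hβ₁lt hncmono
  have hinj : ∀ γ, β₂ ≤ γ → γ < omega1 → Set.InjOn (prF T β₂) (PB γ) := by
    intro γ h1 h2
    refine injOn_of_surjOn_ncard (t := PB β₂) ?_ (hPBfin γ (le_trans hβ₂1 h1) h2) ?_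
    · intro u hu
      obtain ⟨t', ht'1, ht'2⟩ := hPBlift β₂ γ hβ₂1 h1 h2 u hu
      exact ⟨t', ht'1, ht'2⟩
    · rw [hMconst γ h1 h2]
  -- the coherent sequence of min blocking sets
  obtain ⟨ts, hts⟩ := hPBne β₂ hβ₂1 hβ₂2
  have htg0 : ∀ γ, ∃ t : Finset α, β₂ ≤ γ → γ < omega1 → t ∈ PB γ ∧ prF T β₂ t = ts := by
    intro γ
    by_cases h : β₂ ≤ γ ∧ γ < omega1
    · obtain ⟨t, ht1, ht2⟩ := hPBlift β₂ γ hβ₂1 h.1 h.2 ts hts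
      exact ⟨t, fun _ _ => ⟨ht1, ht2⟩⟩
    · exact ⟨∅, fun ha hb => absurd ⟨ha, hb⟩ h⟩
  choose tg htg using htg0
  have huniq : ∀ γ, β₂ ≤ γ → γ < omega1 → ∀ u ∈ PB γ, prF T β₂ u = ts → u = tg γ := by
    intro γ h1 h2 u hu hpu
    obtain ⟨htg1, htg2⟩ := htg γ h1 h2
    exact hinj γ h1 h2 hu htg1 (by rw [hpu, htg2])
  have hcoh : ∀ γ γ', β₂ ≤ γ → γ ≤ γ' → γ' < omega1 → prF T γ (tg γ') = tg γ := by
    intro γ γ' h1 h2 h3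
    obtain ⟨htg1, htg2⟩ := htg γ' (le_trans h1 h2) h3
    refine huniq γ h1 (lt_of_le_of_lt h2 h3) _
      (hPBproj γ γ' (le_trans hβ₂1 h1) h2 h3 _ htg1) ?_
    rw [hpr_tr β₂ γ γ' hβ₂1 h1 h2 h3 _ htg1.1]
    exact htg2
  -- pick a thread through the coherent sequence
  have htscard : ts.card = K := hts.1.2
  obtain ⟨zs, hzs⟩ := Finset.card_pos.mp (by rw [htscard]; exact hK1)
  have hinjcoords : ∀ γ, β₂ ≤ γ → γ < omega1 → Set.InjOn (res T β₂) ↑(tg γ) := by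
    intro γ h1 h2
    obtain ⟨htg1, htg2⟩ := htg γ h1 h2
    refine Finset.injOn_of_card_image_eq ?_
    show (Finset.image (res T β₂) (tg γ)).card = (tg γ).card
    have h3 : prF T β₂ (tg γ) = ts := htg2
    rw [show Finset.image (res T β₂) (tg γ) = prF T β₂ (tg γ) from rfl, h3, htscard,
      htg1.1.2]
  have hcz0 : ∀ γ, ∃ z : α, β₂ ≤ γ → γ < omega1 → z ∈ tg γ ∧ res T β₂ z = zs := by
    intro γ
    by_cases h : β₂ ≤ γ ∧ γ < omega1
    · obtain ⟨htg1, htg2⟩ := htg γ h.1 h.2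
      have : zs ∈ prF T β₂ (tg γ) := by rw [htg2]; exact hzs
      obtain ⟨z, hz1, hz2⟩ := Finset.mem_image.mp this
      exact ⟨z, fun _ _ => ⟨hz1, hz2⟩⟩
    · obtain ⟨z0, -⟩ := hT.1.2.2.2.1 0 zero_lt_omega1
      exact ⟨z0, fun ha hb => absurd ⟨ha, hb⟩ h⟩
  choose cz hcz using hcz0
  have hczlev : ∀ γ, β₂ ≤ γ → γ < omega1 → T.lev (cz γ) = γ := by
    intro γ h1 h2
    exact hMinBlev γ (le_trans hβ₂1 h1) h2 _ (htg γ h1 h2).1.1 _ (hcz γ h1 h2).1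
  have hchain : ∀ γ γ', β₂ ≤ γ → γ < γ' → γ' < omega1 → T.lt (cz γ) (cz γ') := by
    intro γ γ' h1 h2 h3
    have h1' : β₂ ≤ γ' := le_trans h1 (le_of_lt h2)
    have hγlt : γ < omega1 := lt_trans h2 h3
    have hm : res T γ (cz γ') ∈ tg γ := by
      rw [← hcoh γ γ' h1 (le_of_lt h2) h3]
      exact Finset.mem_image.mpr ⟨cz γ', (hcz γ' h1' h3).1, rfl⟩
    have hr : res T β₂ (res T γ (cz γ')) = zs := by
      rw [res_res hTr h1 (by rw [hczlev γ' h1' h3]; exact le_of_lt h2)]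
      exact (hcz γ' h1' h3).2
    have heqc : res T γ (cz γ') = cz γ :=
      hinjcoords γ h1 hγlt hm (hcz γ h1 hγlt).1 (by rw [hr, (hcz γ h1 hγlt).2])
    have hlt : T.lt (res T γ (cz γ')) (cz γ') :=
      (res_spec hTr (by rw [hczlev γ' h1' h3]; exact h2)).1
    rwa [heqc] at hlt
  -- an uncountable chain: contradiction
  set S : Set α := {z | ∃ γ, β₂ ≤ γ ∧ γ < omega1 ∧ cz γ = z} with hS
  have hSchain : T.IsChain' S := by
    rintro z ⟨γ, h1, h2, rfl⟩ w ⟨γ', h1', h2', rfl⟩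
    rcases lt_trichotomy γ γ' with h | h | h
    · exact Or.inr (Or.inl (hchain γ γ' h1 h h2'))
    · subst h; exact Or.inl rfl
    · exact Or.inr (Or.inr (hchain γ' γ h1' h h2))
  have hSc : S.Countable := hT.2 S hSchain
  haveI := hSc.to_subtype
  have hIcoC : (Set.Ico β₂ omega1).Countable := by
    rw [← Set.countable_coe_iff]
    refine Function.Injective.countable
      (f := fun o => (⟨cz o.1, o.1, o.2.1, o.2.2, rfl⟩ : ↥S)) ?_
    rintro ⟨o1, ho1⟩ ⟨o2, ho2⟩ h
    have := congrArg (fun z : ↥S => T.lev z.1) h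
    simp only at this
    rw [hczlev o1 ho1.1 ho1.2, hczlev o2 ho2.1 ho2.2] at this
    exact Subtype.ext this
  apply not_countable_Iio_omega1
  have : Set.Iio omega1 ⊆ Set.Iio β₂ ∪ Set.Ico β₂ omega1 := by
    intro o ho
    rcases lt_or_ge o β₂ with h | h
    · exact Or.inl h
    · exact Or.inr ⟨h, ho⟩
  exact Set.Countable.mono this
    ((countable_Iio_of_lt_omega1 hβ₂2).union hIcoC)

end Main

end Stmt4


/-- if `T` is Aronszajn and `X ⊆ ⁿT` is uncountable and downward closed,
then some uncountable `Y ⊆ X` is level-coherent and dispersed above some level `β`. -/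
theorem exists_dispersed_coherent_subfamily {α : Type} (T : PreTree α) (hT : T.Aronszajn)
    (n : ℕ) (X : Set (Fin (n+1) → α))
    (hXlev : ∀ x ∈ X, ∃ o, ∀ i, T.lev (x i) = o)
    (hXunc : ¬ X.Countable)
    (hXdc : ∀ x ∈ X, ∀ y : Fin (n+1) → α, (∃ o, ∀ i, T.lev (y i) = o) →
      (∀ i, T.le (y i) (x i)) → y ∈ X) :
    ∃ β, β < omega1 ∧ ∃ Y ⊆ X, ¬ Y.Countable ∧
      (∀ γ₀ γ₁, β ≤ γ₀ → γ₀ < γ₁ → γ₁ < omega1 →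
        ∀ x : Fin (n+1) → α, (∀ i, T.lev (x i) = γ₀) →
          (x ∈ Y ↔ ∃ y ∈ Y, (∀ i, T.lev (y i) = γ₁) ∧ ∀ i, T.le (x i) (y i))) ∧
      (∀ γ, β ≤ γ → γ < omega1 → ∀ t : Set α, t.Finite → t ⊆ {z | T.lev z = γ} →
        ∃ x ∈ Y, (∀ i, T.lev (x i) = γ) ∧ ∀ i, x i ∉ t) := by

  have hTr : T.IsTree := hT.1.1
  by_cases hcase : ∃ β, β < omega1 ∧ ∀ γ, β ≤ γ → γ < omega1 →
      ¬ ∃ t : Finset α, Stmt4.Blk T n X γ t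
  · obtain ⟨β, hβ, hnb⟩ := hcase
    refine ⟨β, hβ, {x | Stmt4.PersF T n X x}, fun x hx => hx.1,
      Stmt4.PersF_uncountable hT hXlev hXunc hXdc, ?_, ?_⟩
    · intro γ₀ γ₁ hβγ₀ h01 h1ω x hxlev
      constructor
      · intro hx
        obtain ⟨y, hy1, hy2, hy3⟩ := Stmt4.PersF_extend hT hXlev hXdc hx
          (by rw [hxlev 0]; exact le_of_lt h01) h1ω
        exact ⟨y, hy1, hy2, hy3⟩
      · rintro ⟨y, hy, hylev, hyle⟩
        have hres := Stmt4.PersF_res hT hXlev hXdc hy (γ := γ₀)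
          (by rw [hylev 0]; exact le_of_lt h01)
        have hxy : x = fun i => Stmt4.res T γ₀ (y i) := by
          funext i
          exact (Stmt4.res_unique hTr (hyle i) (hxlev i)).symm
        rw [hxy]
        exact hres.1
    · intro γ hβγ hγω t ht hts
      by_contra hcon
      push_neg at hcon
      refine hnb γ hβγ hγω ⟨ht.toFinset, ?_⟩
      intro x hx hlev
      obtain ⟨i, hi⟩ := hcon x hx hlev
      exact ⟨i, ht.mem_toFinset.mpr hi⟩
  · exfalso
    push_neg at hcase
    refine Stmt4.caseB hT hXlev hXunc hXdc ?_
    intro γ hγ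
    obtain ⟨γ', h1, h2, t, ht⟩ := hcase γ hγ
    classical
    exact ⟨t.image (Stmt4.res T γ), Stmt4.blk_proj hT hXlev hXdc h1 h2 ht⟩
end
end

section
/- (Extension Lemma) Let T be an Aronszajn tree. If p ∈ S(T) and last(p) < μ < ω₁, then there is q ∈ S(T) extending p with last(q) = μ and Γ(q) = Γ(p). Moreover, if h : T_μ → ℚ is a finite function which bounds f(p), then q can be chosen so that in addition f(q)(x) < h(x) for every x ∈ dom h. -/
noncomputable section

open Cardinal Set

universe u v w

/-! ### Infrastructure for the proof of the Extension Lemma -/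

section ExtensionProof

open Classical

variable {α : Type} {T : PreTree α}

/-- the unique predecessor of `x` at level `β` (equal to `x` if `β = lev x`,
junk if `β > lev x`). -/
noncomputable def restr (hI : T.IsTree) (x : α) (β : Ordinal) : α :=
  if h : β < T.lev x then Classical.choose (hI.2.2.2 x β h).exists else x

theorem restr_le (hI : T.IsTree) (x : α) {β : Ordinal} (hβ : β ≤ T.lev x) :
    T.le (restr hI x β) x ∧ T.lev (restr hI x β) = β := by
  unfold restr
  rcases lt_or_eq_of_le hβ with h | h
  · rw [dif_pos h]
    have := Classical.choose_spec (hI.2.2.2 x β h).exists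
    exact ⟨Or.inr this.1, this.2⟩
  · rw [dif_neg (by rw [h]; exact lt_irrefl _)]
    exact ⟨Or.inl rfl, h.symm⟩

theorem restr_unique (hI : T.IsTree) {x y : α} {β : Ordinal} (hyx : T.le y x)
    (hy : T.lev y = β) : restr hI x β = y := by
  rcases hyx with rfl | hlt
  · unfold restr
    rw [dif_neg (by rw [← hy]; exact lt_irrefl _)]
  · have hβ : β < T.lev x := hy ▸ hI.2.1 _ _ hlt
    unfold restr
    rw [dif_pos hβ]
    have hspec := Classical.choose_spec (hI.2.2.2 x β hβ).exists
    exact (hI.2.2.2 x β hβ).unique hspec ⟨hlt, hy⟩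

theorem le_level_eq (hI : T.IsTree) {x y : α} (hle : T.le y x)
    (h : T.lev y = T.lev x) : y = x := by
  rcases hle with rfl | hlt
  · rfl
  · exact absurd h (ne_of_lt (hI.2.1 _ _ hlt))

theorem tle_trans (hI : T.IsTree) {x y z : α} (h1 : T.le x y) (h2 : T.le y z) :
    T.le x z := by
  rcases h1 with rfl | h1
  · exact h2
  · rcases h2 with rfl | h2
    · exact Or.inr h1
    · exact Or.inr (hI.1 _ _ _ h1 h2)

/-- downward linearity: nodes below a common node are comparable in the
direction indicated by their levels. -/
theorem le_of_le_of_lev_le (hI : T.IsTree) {x y z : α} (hxz : T.lt x z)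
    (hyz : T.le y z) (hxy : T.lev x ≤ T.lev y) : T.le x y := by
  rcases hyz with rfl | hyz
  · exact Or.inr hxz
  · rcases hI.2.2.1 z x y hxz hyz with rfl | h | h
    · exact Or.inl rfl
    · exact Or.inr h
    · exact absurd hxy (not_le.mpr (hI.2.1 _ _ h))

theorem le_of_le_of_lev_le' (hI : T.IsTree) {x y z : α} (hxz : T.le x z)
    (hyz : T.le y z) (hxy : T.lev x ≤ T.lev y) : T.le x y := by
  rcases hxz with rfl | h
  · have hyx : T.lev y = T.lev x :=
      le_antisymm (by rcases hyz with rfl | h; exacts [le_rfl, (hI.2.1 _ _ h).le]) hxy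
    exact Or.inl (le_level_eq hI hyz hyx).symm
  · exact le_of_le_of_lev_le hI h hyz hxy

theorem restr_restr (hI : T.IsTree) (x : α) {β₁ β₂ : Ordinal} (h12 : β₁ ≤ β₂)
    (h2 : β₂ ≤ T.lev x) : restr hI (restr hI x β₂) β₁ = restr hI x β₁ := by
  have h2' := restr_le hI x h2
  have h1' := restr_le hI x (le_trans h12 h2)
  exact (restr_unique hI
    (le_of_le_of_lev_le' hI h1'.1 h2'.1 (by rw [h1'.2, h2'.2]; exact h12)) h1'.2)

theorem sextends_refl (q : SCond T) : SExtends q q :=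
  ⟨le_rfl, fun _ _ => rfl, fun _ _ _ => subset_rfl⟩

theorem sextends_trans {q r s : SCond T} (h1 : SExtends r q) (h2 : SExtends s r) :
    SExtends s q := by
  refine ⟨le_trans h1.1 h2.1, fun x hx => ?_, fun γ hγ1 hγ2 => ?_⟩
  · rw [h2.2.1 x (by rw [h1.2.1 x hx]; exact hx), h1.2.1 x hx]
  · exact subset_trans (h1.2.2 γ (le_trans h2.1 hγ1) hγ2) (h2.2.2 γ hγ1 hγ2)

/-- lifting fulfillment of the restriction of a requirement `H` of height `μ`
at the current top level `q.last` to information about `H` itself. -/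
theorem lift_fulfill (hI : T.IsTree) (q : SCond T) {μ : Ordinal} (hlt : q.last < μ)
    (hμ : μ < omega1) {H : Set (α → Option ℚ)} (hH : H ∈ q.Γ μ)
    (bad : Set α) (hbadfin : bad.Finite) (hbadlev : ∀ x ∈ bad, T.lev x = μ) :
    ∃ hj ∈ H, (∀ x ∈ bad, hj x = none) ∧
      (∀ x v, hj x = some v → T.lev x = μ ∧
        ∃ r, q.f (restr hI x q.last) = some r ∧ r < v) := by
  have hbase : q.base ≤ μ := le_trans q.base_le hlt.le
  have hcoh := q.promise.2.2.2 q.last μ q.base_le hlt hμ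
  set H' : Set (α → Option ℚ) := {h' | ∃ h ∈ H, IsRestrictTo T q.last h h'} with hH'def
  have hH' : H' ∈ q.Γ q.last := by rw [hcoh]; exact ⟨H, hH, rfl⟩
  set t' : Set α := (fun x => restr hI x q.last) '' bad with ht'def
  have ht'fin : t'.Finite := hbadfin.image _
  have ht'lev : t' ⊆ {x | T.lev x = q.last} := by
    rintro y ⟨x, hx, rfl⟩
    exact (restr_le hI x (by rw [hbadlev x hx]; exact hlt.le)).2
  obtain ⟨h', hh'H', hb, hnone⟩ := q.fulfills H' hH' t' ht'fin ht'lev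
  obtain ⟨hj, hjH, hres⟩ := hh'H'
  obtain ⟨n, hreq⟩ := q.promise.2.1
  have hjreq := hreq μ hbase hμ H hH hj hjH
  refine ⟨hj, hjH, fun x hx => ?_, fun x v hv => ?_⟩
  · by_contra hne
    have hy := hres.1 (restr hI x q.last)
    have hylev : T.lev (restr hI x q.last) = q.last :=
      (restr_le hI x (by rw [hbadlev x hx]; exact hlt.le)).2
    have hyle : T.le (restr hI x q.last) x :=
      (restr_le hI x (by rw [hbadlev x hx]; exact hlt.le)).1
    have : h' (restr hI x q.last) ≠ none := hy.mpr ⟨hylev, x, hyle, hne⟩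
    exact this (hnone _ ⟨x, hx, rfl⟩)
  · have hxlev : T.lev x = μ := hjreq.2.2 x (by simp [pdom, hv])
    have hlast_le : q.last ≤ T.lev x := by rw [hxlev]; exact hlt.le
    have hyr := restr_le hI x hlast_le
    have hval : h' (restr hI x q.last) = some v := by
      rw [hres.2 (restr hI x q.last) x hyr.2 hyr.1 (by simp [hv]), hv]
    obtain ⟨y', r, hy'le, hy'lev, hfr, hrv⟩ := hb _ _ hval
    have : y' = restr hI x q.last := le_level_eq hI hy'le (by rw [hy'lev, hyr.2])
    exact ⟨hxlev, r, this ▸ hfr, hrv⟩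

/-- existence of a "fiberwise minimum" bounding function at level `γ` for a
finite set of committed nodes with committed values `v`. -/
theorem exists_minB (hI : T.IsTree) {S : Set α} (hS : S.Finite) (v : α → ℚ) (γ : Ordinal) :
    ∃ B : α → Option ℚ, (pdom B).Finite ∧
      (∀ y ∈ pdom B, ∃ x ∈ S, restr hI x γ = y) ∧
      (∀ x ∈ S, ∃ b, B (restr hI x γ) = some b ∧ b ≤ v x) ∧
      (∀ y b, B y = some b → ∃ x ∈ S, restr hI x γ = y ∧ v x = b) := by
  classical
  set P : α → α → Prop := fun y x =>
    x ∈ S ∧ restr hI x γ = y ∧ ∀ x' ∈ S, restr hI x' γ = y → v x ≤ v x' with hP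
  set B : α → Option ℚ := fun y =>
    if hy : ∃ x, P y x then some (v (Classical.choose hy)) else none with hB
  have hmem : ∀ y ∈ pdom B, ∃ x, P y x := by
    intro y hy
    by_contra hc
    exact hy (by simp only [hB, dif_neg hc])
  have hsub : pdom B ⊆ (fun x => restr hI x γ) '' S := by
    intro y hy
    obtain ⟨x, hx⟩ := hmem y hy
    exact ⟨x, hx.1, hx.2.1⟩
  refine ⟨B, (hS.image _).subset hsub, fun y hy => ?_, fun x hx => ?_, fun y b hb => ?_⟩
  · obtain ⟨x, hx⟩ := hmem y hy; exact ⟨x, hx.1, hx.2.1⟩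
  · have hfib : {x' ∈ S | restr hI x' γ = restr hI x γ}.Nonempty := ⟨x, hx, rfl⟩
    obtain ⟨x₀, hx₀, hmin⟩ :=
      Set.exists_min_image _ v (hS.subset (Set.sep_subset _ _)) hfib
    have hy : ∃ x', P (restr hI x γ) x' :=
      ⟨x₀, hx₀.1, hx₀.2, fun x' hx' hx'e => hmin x' ⟨hx', hx'e⟩⟩
    have hcs := Classical.choose_spec hy
    refine ⟨v (Classical.choose hy), by simp only [hB, dif_pos hy], ?_⟩
    exact hcs.2.2 x hx rfl
  · have hy : ∃ x, P y x := by
      by_contra hc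
      rw [hB] at hb
      simp only [dif_neg hc] at hb
      exact nomatch hb
    have hcs := Classical.choose_spec hy
    have : b = v (Classical.choose hy) := by
      simp only [hB, dif_pos hy] at hb
      exact (Option.some_injective _ hb).symm
    exact ⟨Classical.choose hy, hcs.1, hcs.2.1, this.symm⟩

/-- a strictly increasing cofinal ω-sequence in a countable limit ordinal,
starting at a prescribed value. -/
theorem exists_cofinal_seq {μ : Ordinal} (hlim : Order.IsSuccLimit μ) (hμ : μ < omega1)
    (ρ₀ : Ordinal) (hρ₀ : ρ₀ < μ) :
    ∃ β : ℕ → Ordinal, β 0 = ρ₀ ∧ (∀ n, β n < β (n+1)) ∧ (∀ n, β n < μ) ∧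
      ∀ ρ, ρ < μ → ∃ n, ρ ≤ β n := by
  have hcard : μ.card ≤ Cardinal.aleph0 := by
    rw [omega1, Cardinal.lt_ord] at hμ
    have := hμ.trans_eq (Cardinal.succ_aleph0).symm
    exact Order.lt_succ_iff.mp this
  obtain ⟨ι, g, hlsub, hmk⟩ := Ordinal.exists_lsub_cof μ
  have hιc : Countable ι := by
    rw [← Cardinal.mk_le_aleph0_iff]
    exact hmk.le.trans ((Ordinal.cof_le_card μ).trans hcard)
  have hιne : Nonempty ι := by
    by_contra hc
    rw [not_nonempty_iff] at hc
    have : Ordinal.lsub g = 0 := (Ordinal.lsub_eq_zero_iff g).mpr hc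
    rw [hlsub] at this
    exact (Ordinal.isSuccLimit_iff.mp hlim).1 this
  obtain ⟨u, hu⟩ := exists_surjective_nat ι
  set g' : ℕ → Ordinal := fun n => g (u n) with hg'
  have hg'lt : ∀ n, g' n < μ := fun n => hlsub ▸ Ordinal.lt_lsub g (u n)
  have hg'cof : ∀ ρ, ρ < μ → ∃ n, ρ ≤ g' n := by
    intro ρ hρ
    rw [← hlsub] at hρ
    obtain ⟨i, hi⟩ := Ordinal.lt_lsub_iff.mp hρ
    obtain ⟨n, rfl⟩ := hu i
    exact ⟨n, hi⟩
  set β : ℕ → Ordinal := fun n => Nat.rec ρ₀ (fun n b => max (b + 1) (g' n)) n with hβ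
  have hβs : ∀ n, β (n + 1) = max (β n + 1) (g' n) := fun n => rfl
  have hβlt : ∀ n, β n < μ := by
    intro n
    induction n with
    | zero => exact hρ₀
    | succ n ih =>
      rw [hβs]
      apply max_lt _ (hg'lt n)
      rw [Ordinal.add_one_eq_succ]
      exact hlim.succ_lt ih
  refine ⟨β, rfl, fun n => ?_, hβlt, fun ρ hρ => ?_⟩
  · rw [hβs]
    exact lt_of_lt_of_le (by rw [Ordinal.add_one_eq_succ]; exact Order.lt_succ _) (le_max_left _ _)
  · obtain ⟨n, hn⟩ := hg'cof ρ hρ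
    exact ⟨n + 1, le_trans hn (by rw [hβs]; exact le_max_right _ _)⟩

/-- domain of a commitment function -/
def Cdom {α : Type} (C : α → Option (ℚ × ℚ)) : Set α := {x | C x ≠ none}

/-- the invariant maintained along the ω-step construction in the proof of the
Extension Lemma.  The state consists of a condition (the current approximation)
together with a finite set of commitments `x ↦ (c, c')` meaning: the final value
at `x` will lie in the open interval `(c', c)`. -/
def MInv {α : Type} {T : PreTree α} (hI : T.IsTree) (q₀ : SCond T) (μ : Ordinal)
    (β : ℕ → Ordinal) (h : α → Option ℚ)
    (e : ℕ → Set (α → Option ℚ) × Set α) (z : ℕ → α)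
    (k : ℕ) (s : SCond T × (α → Option (ℚ × ℚ))) : Prop :=
  s.1.last = β k ∧ s.1.Γ = q₀.Γ ∧ s.1.base = q₀.base ∧ SExtends s.1 q₀ ∧
  (Cdom s.2).Finite ∧ (∀ x ∈ Cdom s.2, T.lev x = μ) ∧
  (∀ x c c', s.2 x = some (c, c') →
    c' < c ∧ ∃ r, s.1.f (restr hI x (β k)) = some r ∧ r < c') ∧
  (∀ x qx, h x = some qx → ∃ c', s.2 x = some (qx, c')) ∧
  (∀ j, j < k → ∃ hj ∈ (e j).1, (∀ x ∈ (e j).2, hj x = none) ∧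
    ∀ x v, hj x = some v → ∃ c', s.2 x = some (v, c')) ∧
  (∀ j, j < k → s.2 (z j) ≠ none)

/-- successive states extend each other -/
def MLink {α : Type} {T : PreTree α} (s s' : SCond T × (α → Option (ℚ × ℚ))) : Prop :=
  (∀ x, s.1.f x ≠ none → s'.1.f x = s.1.f x) ∧ (∀ x v, s.2 x = some v → s'.2 x = some v)

/-- building an ω-sequence of states by recursion with choice -/
theorem nat_rec_choice {σ : Type*} (Inv : ℕ → σ → Prop) (Link : σ → σ → Prop) (s₀ : σ)
    (h0 : Inv 0 s₀) (hstep : ∀ k s, Inv k s → ∃ s', Inv (k+1) s' ∧ Link s s') :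
    ∃ S : ℕ → σ, S 0 = s₀ ∧ (∀ k, Inv k (S k)) ∧ ∀ k, Link (S k) (S (k+1)) := by
  choose F hF1 hF2 using hstep
  let G : (k : ℕ) → {s : σ // Inv k s} :=
    fun k => Nat.rec ⟨s₀, h0⟩ (fun k p => ⟨F k p.1 p.2, hF1 k p.1 p.2⟩) k
  exact ⟨fun k => (G k).1, rfl, fun k => (G k).2, fun k => hF2 k (G k).1 (G k).2⟩

/-- one step of the construction: handle one task (a requirement together with a
finite set to avoid) and one node of the top level, then advance the approximation. -/
theorem mstep {q₀ : SCond T} (hO : T.IsOmega1Tree) {μ : Ordinal} (hμ : μ < omega1)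
    (β : ℕ → Ordinal) (hβmono : Monotone β) (hβlt : ∀ n, β n < μ)
    (h : α → Option ℚ)
    (e : ℕ → Set (α → Option ℚ) × Set α)
    (he : ∀ k, (e k).1 ∈ q₀.Γ μ ∧ (e k).2.Finite ∧ (e k).2 ⊆ {x | T.lev x = μ})
    (z : ℕ → α) (hz : ∀ k, T.lev (z k) = μ)
    (oracle : ∀ (k : ℕ) (q : SCond T), q.Γ = q₀.Γ → q.base = q₀.base → q.last = β k →
      ∀ B : α → Option ℚ, (pdom B).Finite → pdom B ⊆ {x | T.lev x = β (k+1)} →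
      Bounds T (β k) q.f B →
      ∃ q' : SCond T, SExtends q' q ∧ q'.last = β (k+1) ∧ q'.base = q₀.base ∧
        q'.Γ = q₀.Γ ∧ ∀ x qx, B x = some qx → ∃ rx, q'.f x = some rx ∧ rx < qx)
    (k : ℕ) (s : SCond T × (α → Option (ℚ × ℚ)))
    (hs : MInv hO.1 q₀ μ β h e z k s) :
    ∃ s', MInv hO.1 q₀ μ β h e z (k+1) s' ∧ MLink s s' := by
  classical
  have hI := hO.1
  obtain ⟨q, C⟩ := s
  obtain ⟨hlast, hΓ, hbase, hext, hCfin, hClev, hCord, hCh, htask, hnode⟩ := hs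
  set bad : Set α := Cdom C ∪ (e k).2 with hbaddef
  have hbadfin : bad.Finite := hCfin.union (he k).2.1
  have hbadlev : ∀ x ∈ bad, T.lev x = μ := by
    rintro x (hx | hx)
    · exact hClev x hx
    · exact (he k).2.2 hx
  have hqlt : q.last < μ := by rw [hlast]; exact hβlt k
  have hHmem : (e k).1 ∈ q.Γ μ := by rw [hΓ]; exact (he k).1
  obtain ⟨hj, hjH, hjnone, hjval⟩ := lift_fulfill hI q hqlt hμ hHmem bad hbadfin hbadlev
  have hjval' : ∀ x v, hj x = some v → T.lev x = μ ∧
      ∃ r, q.f (restr hI x (β k)) = some r ∧ r < v := by rw [← hlast]; exact hjval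
  obtain ⟨n, hreq⟩ := q₀.promise.2.1
  have hbaseμ : q₀.base ≤ μ := le_trans q₀.base_le (le_trans hext.1 hqlt.le)
  have hjfin : (pdom hj).Finite := (hreq μ hbaseμ hμ (e k).1 (he k).1 hj hjH).1
  set fv : α → ℚ := fun x => (q.f (restr hI x (β k))).getD 0 with hfv
  set C₁ : α → Option (ℚ × ℚ) :=
    fun x => (hj x).elim (C x) (fun v => some (v, (fv x + v)/2)) with hC₁
  set C₂ : α → Option (ℚ × ℚ) :=
    if C₁ (z k) = none then
      Function.update C₁ (z k) (some (fv (z k) + 1, fv (z k) + 2⁻¹))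
    else C₁ with hC₂
  have hCdom₁ : ∀ x, hj x = none → C₁ x = C x := by
    intro x hx; simp only [hC₁, hx, Option.elim]
  have hnew₁ : ∀ x v, hj x = some v → C₁ x = some (v, (fv x + v)/2) := by
    intro x v hx; simp only [hC₁, hx, Option.elim]
  have hC1pres : ∀ x v, C x = some v → C₁ x = some v := by
    intro x v hx
    rw [hCdom₁ x (hjnone x (Or.inl (by simp [Cdom, hx]))), hx]
  have hC2pres : ∀ x v, C₁ x = some v → C₂ x = some v := by
    intro x v hx
    rw [hC₂]
    split
    · next hzk =>
      rw [Function.update_of_ne (fun hxz => by rw [hxz, hzk] at hx; exact nomatch hx)]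
      exact hx
    · exact hx
  have hC1cases : ∀ x p, C₁ x = some p →
      C x = some p ∨ ∃ v, hj x = some v ∧ p = (v, (fv x + v)/2) := by
    intro x p hx
    rcases hhj : hj x with _ | v
    · rw [hCdom₁ x hhj] at hx; exact Or.inl hx
    · rw [hnew₁ x v hhj] at hx
      exact Or.inr ⟨v, rfl, (Option.some_injective _ hx).symm⟩
  have hC2cases : ∀ x p, C₂ x = some p →
      C₁ x = some p ∨ (x = z k ∧ p = (fv (z k) + 1, fv (z k) + 2⁻¹)) := by
    intro x p hx
    rw [hC₂] at hx
    revert hx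
    split
    · next hzk =>
      intro hx
      by_cases hxz : x = z k
      · subst hxz
        rw [Function.update_self] at hx
        exact Or.inr ⟨rfl, (Option.some_injective _ hx).symm⟩
      · rw [Function.update_of_ne hxz] at hx
        exact Or.inl hx
    · exact fun hx => Or.inl hx
  have hCdom₂ : Cdom C₂ ⊆ Cdom C ∪ pdom hj ∪ {z k} := by
    intro x hx
    obtain ⟨p, hp⟩ := Option.ne_none_iff_exists'.mp hx
    rcases hC2cases x p hp with hp' | ⟨rfl, _⟩
    · rcases hC1cases x p hp' with hp'' | ⟨v, hv, _⟩
      · exact Or.inl (Or.inl (by simp [Cdom, hp'']))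
      · exact Or.inl (Or.inr (by simp [pdom, hv]))
    · exact Or.inr rfl
  have hC2fin : (Cdom C₂).Finite :=
    Set.Finite.subset ((hCfin.union hjfin).union (Set.finite_singleton _)) hCdom₂
  have hC2lev : ∀ x ∈ Cdom C₂, T.lev x = μ := by
    intro x hx
    rcases hCdom₂ hx with (hx' | hx') | hx'
    · exact hClev x hx'
    · obtain ⟨v, hv⟩ := Option.ne_none_iff_exists'.mp hx'
      exact (hjval' x v hv).1
    · rw [hx']; exact hz k
  have hzf : ∃ r, q.f (restr hI (z k) (β k)) = some r := by
    have hlev : T.lev (restr hI (z k) (β k)) = β k :=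
      (restr_le hI (z k) (by rw [hz k]; exact (hβlt k).le)).2
    have := (q.approx.2.1 (restr hI (z k) (β k))).mpr (by rw [hlev, hlast])
    exact Option.ne_none_iff_exists'.mp this
  have hford : ∀ x c c', C₂ x = some (c, c') →
      c' < c ∧ ∃ r, q.f (restr hI x (β k)) = some r ∧ r < c' := by
    intro x c c' hx
    rcases hC2cases x (c, c') hx with hp' | ⟨rfl, hp⟩
    · rcases hC1cases x (c, c') hp' with hp'' | ⟨v, hv, hpeq⟩
      · exact hCord x c c' hp''
      · obtain ⟨r, hr, hrv⟩ := (hjval' x v hv).2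
        have hfvx : fv x = r := by rw [hfv]; simp [hr]
        have hceq : c = v ∧ c' = (fv x + v)/2 := by
          constructor
          · exact congrArg Prod.fst hpeq
          · exact congrArg Prod.snd hpeq
        rw [hceq.1, hceq.2, hfvx]
        exact ⟨by linarith, r, hr, by linarith⟩
    · obtain ⟨r, hr⟩ := hzf
      have hfvz : fv (z k) = r := by rw [hfv]; simp [hr]
      have hc : c = fv (z k) + 1 := congrArg Prod.fst hp
      have hc' : c' = fv (z k) + 2⁻¹ := congrArg Prod.snd hp
      rw [hc, hc', hfvz]
      refine ⟨by linarith, r, hr, by linarith⟩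
  set vv : α → ℚ := fun x => ((C₂ x).elim 0 Prod.snd) with hvv
  obtain ⟨B, hBfin, hBdom, hBmin, hBval⟩ := exists_minB hI hC2fin vv (β (k+1))
  have hBlev : pdom B ⊆ {x | T.lev x = β (k+1)} := by
    intro y hy
    obtain ⟨x, hxS, hxr⟩ := hBdom y hy
    rw [← hxr]
    exact (restr_le hI x (by rw [hC2lev x hxS]; exact (hβlt (k+1)).le)).2
  have hBb : Bounds T (β k) q.f B := by
    intro x qx hBx
    obtain ⟨x₀, hx₀S, hx₀r, hx₀v⟩ := hBval x qx hBx
    obtain ⟨⟨c, c'⟩, hp⟩ := Option.ne_none_iff_exists'.mp hx₀S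
    have hvvx : vv x₀ = c' := by rw [hvv]; simp [hp]
    obtain ⟨_, r, hr, hrc⟩ := hford x₀ c c' hp
    have hlevx₀ : T.lev x₀ = μ := hC2lev x₀ hx₀S
    have hrr : restr hI x (β k) = restr hI x₀ (β k) := by
      rw [← hx₀r]
      exact restr_restr hI x₀ (hβmono (Nat.le_succ k)) (by rw [hlevx₀]; exact (hβlt (k+1)).le)
    have hxlev : T.lev x = β (k+1) := by
      rw [← hx₀r]
      exact (restr_le hI x₀ (by rw [hlevx₀]; exact (hβlt (k+1)).le)).2
    have hres := restr_le hI x (show β k ≤ T.lev x by rw [hxlev]; exact hβmono (Nat.le_succ k))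
    refine ⟨restr hI x (β k), r, hres.1, hres.2, by rw [hrr]; exact hr, ?_⟩
    rw [← hx₀v, hvvx]
    exact hrc
  obtain ⟨q', hq'ext, hq'last, hq'base, hq'Γ, hq'ptw⟩ :=
    oracle k q hΓ hbase hlast B hBfin hBlev hBb
  refine ⟨(q', C₂), ⟨hq'last, hq'Γ, hq'base, sextends_trans hext hq'ext, hC2fin, hC2lev,
    ?_, ?_, ?_, ?_⟩, hq'ext.2.1, fun x v hv => hC2pres x v (hC1pres x v hv)⟩
  · -- commitments still bound the extended approximation
    intro x c c' hx
    have hx' : C₂ x = some (c, c') := hx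
    have hxS : x ∈ Cdom C₂ := by simp [Cdom, hx']
    obtain ⟨b, hb, hble⟩ := hBmin x hxS
    obtain ⟨rx, hrx, hrxb⟩ := hq'ptw _ b hb
    have hvvx : vv x = c' := by rw [hvv]; simp [hx']
    exact ⟨(hford x c c' hx').1, rx, hrx, lt_of_lt_of_le hrxb (by rw [← hvvx]; exact hble)⟩
  · -- the commitments coming from `h`
    intro x qx hx
    obtain ⟨c', hc'⟩ := hCh x qx hx
    exact ⟨c', hC2pres _ _ (hC1pres _ _ hc')⟩
  · -- the tasks
    intro j hj'
    rcases Nat.lt_succ_iff_lt_or_eq.mp hj' with hjk | rfl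
    · obtain ⟨hh, hhH, hhnone, hhval⟩ := htask j hjk
      exact ⟨hh, hhH, hhnone, fun x v hv =>
        (hhval x v hv).imp (fun c' hc' => hC2pres _ _ (hC1pres _ _ hc'))⟩
    · exact ⟨hj, hjH, fun x hx => hjnone x (Or.inr hx),
        fun x v hv => ⟨(fv x + v)/2, hC2pres _ _ (hnew₁ x v hv)⟩⟩
  · -- the nodes
    intro j hj'
    show C₂ (z j) ≠ none
    rcases Nat.lt_succ_iff_lt_or_eq.mp hj' with hjk | rfl
    · rw [hC2pres _ _ (hC1pres _ _ (Option.ne_none_iff_exists'.mp (hnode j hjk)).choose_spec)]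
      exact Option.some_ne_none _
    · rw [hC₂]
      split
      · rw [Function.update_self]
        exact Option.some_ne_none _
      · next hzk => exact hzk

/-- the master construction: extend a condition `q₀` to height `μ`, staying below a
given finite bounding function `h` of height `μ`, along a weakly increasing sequence
`β` of levels converging to `μ`, given an oracle performing each single advance. -/
theorem master (hO : T.IsOmega1Tree) {μ : Ordinal} (hμ : μ < omega1)
    (q₀ : SCond T) (hq₀ : q₀.last < μ)
    (β : ℕ → Ordinal) (hβ0 : β 0 = q₀.last) (hβmono : Monotone β) (hβlt : ∀ n, β n < μ)
    (hcov : ∀ ρ, ρ < μ → ∃ n, ρ ≤ β n)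
    (oracle : ∀ (k : ℕ) (q : SCond T), q.Γ = q₀.Γ → q.base = q₀.base → q.last = β k →
      ∀ B : α → Option ℚ, (pdom B).Finite → pdom B ⊆ {x | T.lev x = β (k+1)} →
      Bounds T (β k) q.f B →
      ∃ q' : SCond T, SExtends q' q ∧ q'.last = β (k+1) ∧ q'.base = q₀.base ∧
        q'.Γ = q₀.Γ ∧ ∀ x qx, B x = some qx → ∃ rx, q'.f x = some rx ∧ rx < qx)
    (h : α → Option ℚ) (hhfin : (pdom h).Finite) (hhlev : pdom h ⊆ {x | T.lev x = μ})
    (hhb : Bounds T q₀.last q₀.f h) :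
    ∃ q : SCond T, SExtends q q₀ ∧ q.last = μ ∧ q.base = q₀.base ∧ q.Γ = q₀.Γ ∧
      ∀ x qx, h x = some qx → ∃ rx, q.f x = some rx ∧ rx < qx := by
  classical
  have hI := hO.1
  have hbaseμ : q₀.base ≤ μ := le_trans q₀.base_le hq₀.le
  -- enumerations
  have hlevc : {x | T.lev x = μ}.Countable := hO.2.2.1 μ hμ
  obtain ⟨x₀, hx₀⟩ := hO.2.2.2.1 μ hμ
  obtain ⟨z, hzr⟩ := hlevc.exists_eq_range ⟨x₀, hx₀⟩
  have hz : ∀ k, T.lev (z k) = μ := fun k =>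
    show z k ∈ {x | T.lev x = μ} by rw [hzr]; exact ⟨k, rfl⟩
  have hzall : ∀ x, T.lev x = μ → ∃ k, z k = x := fun x hx =>
    show x ∈ Set.range z by rw [← hzr]; exact hx
  have hΓprops := q₀.promise.2.2.1 μ hbaseμ hμ
  set P : Set (Set (α → Option ℚ) × Set α) :=
    (q₀.Γ μ) ×ˢ {t : Set α | t.Finite ∧ t ⊆ {x | T.lev x = μ}} with hPdef
  have hPc : P.Countable := hΓprops.1.prod (Set.countable_setOf_finite_subset hlevc)
  have hPne : P.Nonempty := by
    obtain ⟨H₀, hH₀⟩ := hΓprops.2.1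
    exact ⟨(H₀, ∅), hH₀, Set.finite_empty, Set.empty_subset _⟩
  obtain ⟨e, her⟩ := hPc.exists_eq_range hPne
  have he : ∀ k, (e k).1 ∈ q₀.Γ μ ∧ (e k).2.Finite ∧ (e k).2 ⊆ {x | T.lev x = μ} := by
    intro k
    have hek : e k ∈ P := by rw [her]; exact ⟨k, rfl⟩
    exact ⟨hek.1, hek.2.1, hek.2.2⟩
  have heall : ∀ H t, H ∈ q₀.Γ μ → t.Finite → t ⊆ {x | T.lev x = μ} →
      ∃ k, e k = (H, t) := by
    intro H t h1 h2 h3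
    have hm : (H, t) ∈ Set.range e := by rw [← her]; exact ⟨h1, h2, h3⟩
    obtain ⟨k, hk⟩ := hm
    exact ⟨k, hk⟩
  -- the initial commitments, coming from `h`
  set C₀ : α → Option (ℚ × ℚ) := fun x =>
    (h x).elim none (fun v => some (v, ((q₀.f (restr hI x (β 0))).getD 0 + v)/2)) with hC₀
  have hC₀cases : ∀ x p, C₀ x = some p →
      ∃ v, h x = some v ∧ p = (v, ((q₀.f (restr hI x (β 0))).getD 0 + v)/2) := by
    intro x p hp
    rcases hhx : h x with _ | v
    · rw [hC₀] at hp
      simp only [hhx, Option.elim] at hp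
      exact nomatch hp
    · rw [hC₀] at hp
      simp only [hhx, Option.elim] at hp
      exact ⟨v, rfl, (Option.some_injective _ hp).symm⟩
  have hC₀some : ∀ x v, h x = some v →
      C₀ x = some (v, ((q₀.f (restr hI x (β 0))).getD 0 + v)/2) := by
    intro x v hx
    rw [hC₀]; simp only [hx, Option.elim]
  have hInv0 : MInv hI q₀ μ β h e z 0 (q₀, C₀) := by
    have hCdom₀ : Cdom C₀ ⊆ pdom h := by
      intro x hx
      rcases hhx : h x with _ | v
      · exfalso; apply hx; rw [hC₀]; simp only [hhx, Option.elim]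
      · simp [pdom, hhx]
    refine ⟨hβ0.symm, rfl, rfl, sextends_refl q₀, hhfin.subset hCdom₀,
      fun x hx => hhlev (hCdom₀ hx), ?_, fun x qx hx => ⟨_, hC₀some x qx hx⟩,
      fun j hj => absurd hj (Nat.not_lt_zero j), fun j hj => absurd hj (Nat.not_lt_zero j)⟩
    intro x c c' hp
    obtain ⟨v, hv, hpeq⟩ := hC₀cases x (c, c') hp
    obtain ⟨y, r, hyle, hylev, hyr, hrv⟩ := hhb x v hv
    have hyres : restr hI x (β 0) = y := restr_unique hI hyle (by rw [hylev, hβ0])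
    have hgd : (q₀.f (restr hI x (β 0))).getD 0 = r := by rw [hyres, hyr]; rfl
    have hc : c = v := congrArg Prod.fst hpeq
    have hc' : c' = ((q₀.f (restr hI x (β 0))).getD 0 + v)/2 := congrArg Prod.snd hpeq
    rw [hc, hc', hgd, hyres]
    exact ⟨by linarith, r, hyr, by linarith⟩
  obtain ⟨S, hS0, hSInv, hSLink⟩ := nat_rec_choice (MInv hI q₀ μ β h e z) MLink (q₀, C₀)
    hInv0 (mstep hO hμ β hβmono hβlt h e he z hz oracle)
  have hlastn : ∀ n, (S n).1.last = β n := fun n => (hSInv n).1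
  -- chain lemmas
  have chainF : ∀ m n, m ≤ n → ∀ x, (S m).1.f x ≠ none → (S n).1.f x = (S m).1.f x := by
    intro m n hmn
    induction n, hmn using Nat.le_induction with
    | base => exact fun x _ => rfl
    | succ n hmn ih =>
      intro x hx
      rw [(hSLink n).1 x (by rw [ih x hx]; exact hx), ih x hx]
  have chainC : ∀ m n, m ≤ n → ∀ x p, (S m).2 x = some p → (S n).2 x = some p := by
    intro m n hmn
    induction n, hmn using Nat.le_induction with
    | base => exact fun x p hp => hp
    | succ n hmn ih => exact fun x p hp => (hSLink n).2 x p (ih x p hp)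
  -- the limit commitments
  set Cinf : α → Option (ℚ × ℚ) := fun x =>
    if hx : ∃ k, (S k).2 x ≠ none then (S (Nat.find hx)).2 x else none with hCinf
  have hCinfEq : ∀ k x p, (S k).2 x = some p → Cinf x = some p := by
    intro k x p hp
    have hx : ∃ k, (S k).2 x ≠ none := ⟨k, by rw [hp]; exact Option.some_ne_none _⟩
    rw [hCinf]
    simp only [dif_pos hx]
    obtain ⟨p', hp'⟩ := Option.ne_none_iff_exists'.mp (Nat.find_spec hx)
    have hle : Nat.find hx ≤ k := Nat.find_min' hx (by rw [hp]; exact Option.some_ne_none _)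
    have hpp := (chainC _ _ hle x p' hp').symm.trans hp
    rw [hp']
    exact congrArg some (Option.some_injective _ hpp)
  have hCbound : ∀ x c c', Cinf x = some (c, c') → c' < c ∧ T.lev x = μ ∧
      ∃ k₀, ∀ n, k₀ ≤ n → ∃ r, (S n).1.f (restr hI x (β n)) = some r ∧ r < c' := by
    intro x c c' hx
    have hex : ∃ k, (S k).2 x ≠ none := by
      by_contra hc
      rw [hCinf] at hx
      simp only [dif_neg hc] at hx
      exact nomatch hx
    rw [hCinf] at hx
    simp only [dif_pos hex] at hx
    refine ⟨((hSInv (Nat.find hex)).2.2.2.2.2.2.1 x c c' hx).1,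
      (hSInv (Nat.find hex)).2.2.2.2.2.1 x (fun hn => Option.some_ne_none _ (hx.symm.trans hn)),
      Nat.find hex, fun n hn => ?_⟩
    exact ((hSInv n).2.2.2.2.2.2.1 x c c' (chainC _ _ hn x _ hx)).2
  -- the final approximation
  set ffin : α → Option ℚ := fun x =>
    if T.lev x = μ then (Cinf x).map (fun cc => (cc.1 + cc.2)/2)
    else if hx : ∃ k, T.lev x ≤ β k then (S (Nat.find hx)).1.f x else none with hffin
  have ffinLow : ∀ k x, T.lev x ≤ β k → ffin x = (S k).1.f x := by
    intro k x hxk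
    have hxμ : ¬ T.lev x = μ := ne_of_lt (lt_of_le_of_lt hxk (hβlt k))
    have hex : ∃ k, T.lev x ≤ β k := ⟨k, hxk⟩
    rw [hffin]
    simp only [if_neg hxμ, dif_pos hex]
    have hi : Nat.find hex ≤ k := Nat.find_min' hex hxk
    have hfi : (S (Nat.find hex)).1.f x ≠ none :=
      ((S (Nat.find hex)).1.approx.2.1 x).mpr (by rw [hlastn]; exact Nat.find_spec hex)
    exact (chainF _ _ hi x hfi).symm
  have ffinμ : ∀ x, T.lev x = μ → ffin x = (Cinf x).map (fun cc => (cc.1 + cc.2)/2) := by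
    intro x hx
    rw [hffin]
    simp only [if_pos hx]
  have ffinHigh : ∀ x, μ < T.lev x → ffin x = none := by
    intro x hx
    have hxμ : ¬ T.lev x = μ := ne_of_gt hx
    have hex : ¬ ∃ k, T.lev x ≤ β k := by
      rintro ⟨k, hk⟩
      exact absurd (lt_of_lt_of_le hx hk) (not_lt.mpr (hβlt k).le)
    rw [hffin]
    simp only [if_neg hxμ, dif_neg hex]
  -- the domain condition
  have hdom : ∀ x, ffin x ≠ none ↔ T.lev x ≤ μ := by
    intro x
    constructor
    · intro hx
      by_contra hc
      rw [ffinHigh x (not_le.mp hc)] at hx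
      exact hx rfl
    · intro hx
      rcases lt_or_eq_of_le hx with hlt | heq
      · obtain ⟨k, hk⟩ := hcov _ hlt
        rw [ffinLow k x hk]
        exact ((S k).1.approx.2.1 x).mpr (by rw [hlastn]; exact hk)
      · obtain ⟨k, hk⟩ := hzall x heq
        have hnz := (hSInv (k+1)).2.2.2.2.2.2.2.2.2 k (Nat.lt_succ_self k)
        obtain ⟨p, hp⟩ := Option.ne_none_iff_exists'.mp hnz
        rw [← hk, ffinμ (z k) (hz k), hCinfEq (k+1) (z k) p hp]
        simp
  -- monotonicity
  have hmono : ∀ x y qx qy, T.lt x y → ffin x = some qx → ffin y = some qy → qx < qy := by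
    intro x y qx qy hxy hfx hfy
    have hxylev : T.lev x < T.lev y := hI.2.1 _ _ hxy
    have hylev : T.lev y ≤ μ := (hdom y).mp (by rw [hfy]; exact Option.some_ne_none _)
    rcases lt_or_eq_of_le hylev with hyμ | hyμ
    · obtain ⟨k, hk⟩ := hcov _ hyμ
      rw [ffinLow k y hk] at hfy
      rw [ffinLow k x (le_trans hxylev.le hk)] at hfx
      exact (S k).1.approx.2.2 x y qx qy hxy hfx hfy
    · rw [ffinμ y hyμ] at hfy
      obtain ⟨⟨c, c'⟩, hcc, hqy⟩ := Option.map_eq_some_iff.mp hfy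
      obtain ⟨hcc', _, k₀, hbnd⟩ := hCbound y c c' hcc
      have hxltμ : T.lev x < μ := by rw [← hyμ]; exact hxylev
      obtain ⟨k₁, hk₁⟩ := hcov _ hxltμ
      have hxn : T.lev x ≤ β (max k₀ k₁) := le_trans hk₁ (hβmono (le_max_right k₀ k₁))
      obtain ⟨r, hr, hrc⟩ := hbnd (max k₀ k₁) (le_max_left k₀ k₁)
      rw [ffinLow (max k₀ k₁) x hxn] at hfx
      have hresy := restr_le hI y
        (show β (max k₀ k₁) ≤ T.lev y by rw [hyμ]; exact (hβlt _).le)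
      have hxle : T.le x (restr hI y (β (max k₀ k₁))) :=
        le_of_le_of_lev_le hI hxy hresy.1 (by rw [hresy.2]; exact hxn)
      have hqylb : c' < qy := by
        have hqy' : (c + c')/2 = qy := hqy
        linarith
      rcases hxle with heq | hlt
      · rw [heq] at hfx
        have : qx = r := Option.some_injective _ (hfx.symm.trans hr)
        linarith
      · have := (S (max k₀ k₁)).1.approx.2.2 x _ qx r hlt hfx hr
        linarith
  -- fulfillment at level μ
  have hful : ∀ H ∈ q₀.Γ μ, FulfillsReq T μ ffin H := by
    intro H hH t htfin htsub
    obtain ⟨k, hk⟩ := heall H t hH htfin htsub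
    obtain ⟨hjj, hjjH, hjjnone, hjjval⟩ :=
      (hSInv (k+1)).2.2.2.2.2.2.2.2.1 k (Nat.lt_succ_self k)
    have hjjH' : hjj ∈ H := by rw [hk] at hjjH; exact hjjH
    have hjjnone' : ∀ x ∈ t, hjj x = none := by rw [hk] at hjjnone; exact hjjnone
    refine ⟨hjj, hjjH', ?_, hjjnone'⟩
    intro x v hx
    obtain ⟨c', hc'⟩ := hjjval x v hx
    have hcinf := hCinfEq (k+1) x _ hc'
    obtain ⟨hvc', hxlev, _⟩ := hCbound x v c' hcinf
    refine ⟨x, (v + c')/2, Or.inl rfl, hxlev, ?_, by linarith⟩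
    rw [ffinμ x hxlev, hcinf]
    rfl
  refine ⟨⟨μ, ffin, q₀.base, q₀.Γ, ⟨hμ, hdom, hmono⟩, q₀.promise, hbaseμ, hful⟩,
    ⟨hq₀.le, fun x hx => ?_, fun γ _ _ => subset_rfl⟩, rfl, rfl, rfl, fun x qx hx => ?_⟩
  · -- values of q₀ are preserved
    have hxl : T.lev x ≤ β 0 := by rw [hβ0]; exact (q₀.approx.2.1 x).mp hx
    show ffin x = q₀.f x
    rw [ffinLow 0 x hxl, hS0]
  · -- the new values are below `h`
    have hC0x := hC₀some x qx hx
    have hcinf := hCinfEq 0 x _ (by rw [hS0]; exact hC0x)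
    obtain ⟨hvc', hxlev, _⟩ := hCbound x qx _ hcinf
    refine ⟨(qx + ((q₀.f (restr hI x (β 0))).getD 0 + qx)/2)/2, ?_, by linarith⟩
    show ffin x = _
    rw [ffinμ x hxlev, hcinf]
    rfl

end ExtensionProof

/-- Extension Lemma: any condition of `S(T)` can be extended, keeping the
same promise, to any countable height `μ > last p`; moreover if a finite function
`h : T_μ → ℚ` bounds `f(p)`, then the extension can be chosen below `h`. -/
theorem extension_lemma {α : Type} (T : PreTree α) (hT : T.Aronszajn)
    (p : SCond T) (μ : Ordinal) (hμ₁ : p.last < μ) (hμ₂ : μ < omega1) :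
    (∃ q : SCond T, SExtends q p ∧ q.last = μ ∧ q.base = p.base ∧ q.Γ = p.Γ) ∧
    (∀ h : α → Option ℚ, (pdom h).Finite → pdom h ⊆ {x | T.lev x = μ} →
      Bounds T p.last p.f h →
      ∃ q : SCond T, SExtends q p ∧ q.last = μ ∧ q.base = p.base ∧ q.Γ = p.Γ ∧
        ∀ x qx, h x = some qx → ∃ rx, q.f x = some rx ∧ rx < qx) := by
  classical
  have hO := hT.1
  have hI := hO.1
  have main : ∀ μ : Ordinal, μ < omega1 → ∀ p : SCond T, p.last < μ →
      ∀ h : α → Option ℚ, (pdom h).Finite → pdom h ⊆ {x | T.lev x = μ} →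
      Bounds T p.last p.f h →
      ∃ q : SCond T, SExtends q p ∧ q.last = μ ∧ q.base = p.base ∧ q.Γ = p.Γ ∧
        ∀ x qx, h x = some qx → ∃ rx, q.f x = some rx ∧ rx < qx := by
    intro μ
    induction μ using Ordinal.induction with
    | h μ IH =>
    intro hμ p hp h hfin hlev hb
    rcases Ordinal.zero_or_succ_or_isSuccLimit μ with rfl | ⟨ν, hν⟩ | hlim
    · exact absurd hp (not_lt_of_ge zero_le)
    · -- successor case
      subst hν
      have hνμ : ν < Order.succ ν := Order.lt_succ ν
      have hνω : ν < omega1 := lt_trans hνμ hμ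
      have hple : p.last ≤ ν := Order.lt_succ_iff.mp hp
      have hlevν : ∀ x ∈ pdom h, ν ≤ T.lev x := by
        intro x hx
        rw [hlev hx]
        exact hνμ.le
      obtain ⟨q₁, hq₁ext, hq₁last, hq₁base, hq₁Γ, hq₁b⟩ : ∃ q₁ : SCond T,
          SExtends q₁ p ∧ q₁.last = ν ∧ q₁.base = p.base ∧ q₁.Γ = p.Γ ∧
          Bounds T ν q₁.f h := by
        rcases lt_or_eq_of_le hple with hplt | hpeq
        · obtain ⟨B₀, hB₀fin, hB₀dom, hB₀min, hB₀val⟩ :=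
            exists_minB hI hfin (fun x => (h x).getD 0) ν
          have hB₀lev : pdom B₀ ⊆ {x | T.lev x = ν} := by
            intro y hy
            obtain ⟨x, hxS, hxr⟩ := hB₀dom y hy
            rw [← hxr]
            exact (restr_le hI x (hlevν x hxS)).2
          have hB₀b : Bounds T p.last p.f B₀ := by
            intro y b hy
            obtain ⟨x, hxS, hxr, hxv⟩ := hB₀val y b hy
            obtain ⟨v, hv⟩ := Option.ne_none_iff_exists'.mp hxS
            obtain ⟨y', r, hy'le, hy'lev, hy'r, hrv⟩ := hb x v hv
            have hvb : v = b := by rw [← hxv, hv]; rfl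
            have hy'res : restr hI x p.last = y' := restr_unique hI hy'le hy'lev
            have hrr : restr hI y p.last = restr hI x p.last := by
              rw [← hxr]
              exact restr_restr hI x hple (hlevν x hxS)
            have hyres := restr_le hI y
              (show p.last ≤ T.lev y by
                rw [← hxr, (restr_le hI x (hlevν x hxS)).2]; exact hple)
            refine ⟨restr hI y p.last, r, hyres.1, hyres.2, ?_, by rw [← hvb]; exact hrv⟩
            rw [hrr, hy'res]
            exact hy'r
          obtain ⟨q₁, hq₁ext, hq₁last, hq₁base, hq₁Γ, hq₁ptw⟩ :=
            IH ν hνμ hνω p hplt B₀ hB₀fin hB₀lev hB₀b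
          refine ⟨q₁, hq₁ext, hq₁last, hq₁base, hq₁Γ, ?_⟩
          intro x v hv
          have hxS : x ∈ pdom h := fun hn => Option.some_ne_none _ (hv.symm.trans hn)
          obtain ⟨b, hB₀x, hble⟩ := hB₀min x hxS
          obtain ⟨rx, hrx, hrxb⟩ := hq₁ptw _ b hB₀x
          have hres := restr_le hI x (hlevν x hxS)
          refine ⟨restr hI x ν, rx, hres.1, hres.2, hrx, ?_⟩
          have hbv : b ≤ v := by rw [← show (h x).getD 0 = v by rw [hv]; rfl]; exact hble
          exact lt_of_lt_of_le hrxb hbv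
        · exact ⟨p, sextends_refl p, hpeq, rfl, rfl, by rw [← hpeq]; exact hb⟩
      have hq₁lt : q₁.last < Order.succ ν := by rw [hq₁last]; exact hνμ
      have oracle : ∀ (k : ℕ) (q : SCond T), q.Γ = q₁.Γ → q.base = q₁.base →
          q.last = (fun _ : ℕ => ν) k →
          ∀ B : α → Option ℚ, (pdom B).Finite →
          pdom B ⊆ {x | T.lev x = (fun _ : ℕ => ν) (k+1)} →
          Bounds T ((fun _ : ℕ => ν) k) q.f B →
          ∃ q' : SCond T, SExtends q' q ∧ q'.last = (fun _ : ℕ => ν) (k+1) ∧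
            q'.base = q₁.base ∧ q'.Γ = q₁.Γ ∧
            ∀ x qx, B x = some qx → ∃ rx, q'.f x = some rx ∧ rx < qx := by
        intro k q hΓ hbase hlast B _ hBlev hBb
        refine ⟨q, sextends_refl q, hlast, hbase, hΓ, fun x qx hBx => ?_⟩
        obtain ⟨y, r, hyle, hylev, hyr, hrq⟩ := hBb x qx hBx
        have hxpd : x ∈ pdom B := fun hn => Option.some_ne_none _ (hBx.symm.trans hn)
        have hxy : y = x := le_level_eq hI hyle (by rw [hylev, hBlev hxpd])
        exact ⟨r, hxy ▸ hyr, hrq⟩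
      obtain ⟨q, hqext, hqlast, hqbase, hqΓ, hqptw⟩ :=
        master hO hμ q₁ hq₁lt (fun _ => ν) hq₁last.symm monotone_const (fun _ => hνμ)
          (fun ρ hρ => ⟨0, Order.lt_succ_iff.mp hρ⟩) oracle h hfin hlev
          (show Bounds T q₁.last q₁.f h by rw [hq₁last]; exact hq₁b)
      exact ⟨q, sextends_trans hq₁ext hqext, hqlast, by rw [hqbase, hq₁base],
        by rw [hqΓ, hq₁Γ], hqptw⟩
    · -- limit case
      obtain ⟨β, hβ0, hβs, hβlt, hβcov⟩ := exists_cofinal_seq hlim hμ p.last hp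
      have hβmono : Monotone β := monotone_nat_of_le_succ (fun n => (hβs n).le)
      have oracle : ∀ (k : ℕ) (q : SCond T), q.Γ = p.Γ → q.base = p.base →
          q.last = β k →
          ∀ B : α → Option ℚ, (pdom B).Finite → pdom B ⊆ {x | T.lev x = β (k+1)} →
          Bounds T (β k) q.f B →
          ∃ q' : SCond T, SExtends q' q ∧ q'.last = β (k+1) ∧ q'.base = p.base ∧
            q'.Γ = p.Γ ∧ ∀ x qx, B x = some qx → ∃ rx, q'.f x = some rx ∧ rx < qx := by
        intro k q hΓ hbase hlast B hBfin hBlev hBb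
        obtain ⟨q', h1, h2, h3, h4, h5⟩ :=
          IH (β (k+1)) (hβlt (k+1)) (lt_trans (hβlt (k+1)) hμ) q
            (by rw [hlast]; exact hβs k) B hBfin hBlev (by rw [hlast]; exact hBb)
        exact ⟨q', h1, h2, by rw [h3, hbase], by rw [h4, hΓ], h5⟩
      exact master hO hμ p hp β hβ0 hβmono hβlt hβcov oracle h hfin hlev hb
  have hemp : pdom (fun _ : α => (none : Option ℚ)) = ∅ := by
    ext x
    simp [pdom]
  constructor
  · obtain ⟨q, h1, h2, h3, h4, _⟩ := main μ hμ₂ p hμ₁ (fun _ => none)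
      (by rw [hemp]; exact Set.finite_empty) (by rw [hemp]; exact Set.empty_subset _)
      (fun x q hx => nomatch hx)
    exact ⟨q, h1, h2, h3, h4⟩
  · intro h hf hl hb
    exact main μ hμ₂ p hμ₁ h hf hl hb
end
end

section
/- Assume CH (2^{ℵ₀} = ℵ₁). Then for every Aronszajn tree T, the poset S(T) satisfies the ℵ₂-chain condition: every set of pairwise incompatible conditions of S(T) has cardinality at most ℵ₁. -/
noncomputable section

open Cardinal Set

universe u v w

/-! auxiliary lemmas for STATEMENT 9 -/

/-- CH transfers between universes -/
theorem cH_transfer.{u', v'} (h : (2 : Cardinal.{u'}) ^ Cardinal.aleph0 = Cardinal.aleph 1) :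
    (2 : Cardinal.{v'}) ^ Cardinal.aleph0 = Cardinal.aleph 1 := by
  have h0 : (2 : Cardinal.{0}) ^ Cardinal.aleph0 = Cardinal.aleph 1 := by
    apply Cardinal.lift_injective.{u', 0}
    rw [Cardinal.lift_power, Cardinal.lift_aleph0, Cardinal.lift_two, Cardinal.lift_aleph,
      Ordinal.lift_one]
    exact h
  have := congrArg (Cardinal.lift.{v', 0}) h0
  rwa [Cardinal.lift_power, Cardinal.lift_aleph0, Cardinal.lift_two, Cardinal.lift_aleph,
    Ordinal.lift_one] at this

/-- the set of nodes of level ≤ a is countable in an ω₁-tree -/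
theorem levset_countable {α : Type} {T : PreTree α} (hT : T.IsOmega1Tree) {a : Ordinal}
    (ha : a < omega1) : {x : α | T.lev x ≤ a}.Countable := by
  have hIic : (Set.Iic a).Countable := by
    have hlim : Order.IsSuccLimit omega1 := Cardinal.isSuccLimit_ord (Cardinal.aleph0_le_aleph 1)
    have ha1 : a + 1 < omega1 := by
      have := hlim.succ_lt ha; rwa [Order.succ_eq_add_one] at this
    have hsucc : a < a + 1 := by rw [Ordinal.add_one_eq_succ]; exact Order.lt_succ a
    have hsub : Set.Iic a ⊆ Set.Iio (a + 1) := fun o ho => lt_of_le_of_lt ho hsucc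
    apply Set.Countable.mono hsub
    rw [← Cardinal.le_aleph0_iff_set_countable, Ordinal.mk_Iio_ordinal]
    have hcard : (a + 1).card ≤ Cardinal.aleph0 := by
      have h2 : (a + 1).card < Cardinal.aleph 1 := Cardinal.lt_ord.mp ha1
      rwa [← Cardinal.succ_aleph0, Order.lt_succ_iff] at h2
    calc Cardinal.lift.{1} (a + 1).card ≤ Cardinal.lift.{1} Cardinal.aleph0 :=
          Cardinal.lift_le.mpr hcard
      _ = Cardinal.aleph0 := Cardinal.lift_aleph0
  have heq : {x : α | T.lev x ≤ a} = ⋃ o ∈ Set.Iic a, {x : α | T.lev x = o} := by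
    ext x; simp
  rw [heq]
  exact hIic.biUnion fun o ho => hT.2.2.1 o (lt_of_le_of_lt ho ha)

/-- under CH, there are at most ℵ₁ partial ℚ-valued functions on a countable set -/
theorem funset_card {α : Type} {s : Set α} (hs : s.Countable)
    (hCH : (2 : Cardinal.{0}) ^ Cardinal.aleph0 = Cardinal.aleph 1) :
    Cardinal.mk (↥s → Option ℚ) ≤ Cardinal.aleph 1 := by
  have h1 : Cardinal.mk (↥s → Option ℚ) = Cardinal.mk (Option ℚ) ^ Cardinal.mk ↥s :=
    (Cardinal.power_def _ _).symm
  rw [h1]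
  have h2 : Cardinal.mk (Option ℚ) ≤ Cardinal.aleph0 := Cardinal.mk_le_aleph0
  have h3 : Cardinal.mk ↥s ≤ Cardinal.aleph0 := Cardinal.le_aleph0_iff_set_countable.mpr hs
  calc Cardinal.mk (Option ℚ) ^ Cardinal.mk ↥s
      ≤ Cardinal.aleph0 ^ Cardinal.mk ↥s := Cardinal.power_le_power_right h2
    _ ≤ Cardinal.aleph0 ^ Cardinal.aleph0 :=
        Cardinal.power_le_power_left Cardinal.aleph0_ne_zero h3
    _ = Cardinal.continuum := Cardinal.aleph0_power_aleph0
    _ = (2 : Cardinal) ^ Cardinal.aleph0 := Cardinal.two_power_aleph0.symm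
    _ = Cardinal.aleph 1 := hCH

/-- two conditions with the same approximation and the same arity are compatible -/
theorem sCond_compat {α : Type} {T : PreTree α} (p q : SCond T)
    (hl : p.last = q.last) (hf : p.f = q.f)
    (hn : ∃ n : ℕ,
      (∀ γ, p.last ≤ γ → γ < omega1 → ∀ H ∈ p.Γ γ, IsRequirement T γ n H) ∧
      (∀ γ, p.last ≤ γ → γ < omega1 → ∀ H ∈ q.Γ γ, IsRequirement T γ n H)) :
    ∃ r : SCond T, SExtends r p ∧ SExtends r q := by
  obtain ⟨n, hnp, hnq⟩ := hn
  have hlt : p.last < omega1 := p.approx.1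
  have hprom : IsPromise T p.last (fun γ => p.Γ γ ∪ q.Γ γ) := by
    refine ⟨hlt, ⟨n, ?_⟩, ?_, ?_⟩
    · intro γ hγ hγ1 H hH
      cases hH with
      | inl h => exact hnp γ hγ hγ1 H h
      | inr h => exact hnq γ hγ hγ1 H h
    · intro γ hγ hγ1
      have hp := p.promise.2.2.1 γ (p.base_le.trans hγ) hγ1
      have hq := q.promise.2.2.1 γ (q.base_le.trans (hl ▸ hγ)) hγ1
      refine ⟨hp.1.union hq.1, ?_, ?_⟩
      · obtain ⟨H, hH⟩ := hp.2.1
        exact ⟨H, Or.inl hH⟩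
      · rintro H (h | h)
        · exact hp.2.2 H h
        · exact hq.2.2 H h
    · intro γ₀ γ₁ h0 h01 h1
      have Pp := p.promise.2.2.2 γ₀ γ₁ (p.base_le.trans h0) h01 h1
      have Pq := q.promise.2.2.2 γ₀ γ₁ (q.base_le.trans (hl ▸ h0)) h01 h1
      ext H'
      constructor
      · rintro (h | h)
        · rw [Pp] at h
          obtain ⟨H, hH, e⟩ := h
          exact ⟨H, Or.inl hH, e⟩
        · rw [Pq] at h
          obtain ⟨H, hH, e⟩ := h
          exact ⟨H, Or.inr hH, e⟩
      · rintro ⟨H, hH | hH, e⟩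
        · left; rw [Pp]; exact ⟨H, hH, e⟩
        · right; rw [Pq]; exact ⟨H, hH, e⟩
  refine ⟨⟨p.last, p.f, p.last, fun γ => p.Γ γ ∪ q.Γ γ, p.approx, hprom, le_refl _, ?_⟩, ?_, ?_⟩
  · rintro H (hH | hH)
    · exact p.fulfills H hH
    · rw [hl] at hH ⊢
      rw [hf]
      exact q.fulfills H hH
  · exact ⟨le_refl _, fun x _ => rfl, fun γ _ _ => Set.subset_union_left⟩
  · exact ⟨hl.ge, fun x _ => congrFun hf x, fun γ _ _ => Set.subset_union_right⟩


/-- assuming CH, for every Aronszajn tree `T` the poset `S(T)` satisfies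
the ℵ₂-chain condition: every pairwise-incompatible set of conditions has size ≤ ℵ₁. -/
theorem sCond_aleph_two_cc {α : Type} (T : PreTree α) (hT : T.Aronszajn)
    (hCH : (2 : Cardinal) ^ Cardinal.aleph0 = Cardinal.aleph 1)
    (A : Set (SCond T))
    (hA : ∀ p ∈ A, ∀ q ∈ A, p ≠ q → ¬ ∃ r : SCond T, SExtends r p ∧ SExtends r q) :
    Cardinal.mk A ≤ Cardinal.aleph 1 := by
  classical
  have hCH0 : (2 : Cardinal.{0}) ^ Cardinal.aleph0 = Cardinal.aleph 1 := cH_transfer hCH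
  set D : Ordinal → Set α := fun a => {x : α | T.lev x ≤ a} with hD
  let C := (a : ↥(Set.Iio omega1)) × ULift.{1} ((↥(D a.1) → Option ℚ) × ℕ)
  let nn : SCond T → ℕ := fun p => Classical.choose p.promise.2.1
  have nnspec : ∀ p : SCond T, ∀ γ, p.base ≤ γ → γ < omega1 →
      ∀ H ∈ p.Γ γ, IsRequirement T γ (nn p) H := fun p => Classical.choose_spec p.promise.2.1
  let Φ : ↥A → C := fun p =>
    ⟨⟨p.1.last, p.1.approx.1⟩, ⟨(fun x => p.1.f x.1, nn p.1)⟩⟩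
  have hinj : Function.Injective Φ := by
    intro p q h
    have hl : p.1.last = q.1.last := congrArg (fun c : C => c.1.1) h
    have hnn : nn p.1 = nn q.1 := congrArg (fun c : C => c.2.down.2) h
    have hfd := congrArg
      (fun c : C => (fun x : α => if hx : x ∈ D c.1.1 then c.2.down.1 ⟨x, hx⟩ else none)) h
    have hdec : ∀ r : ↥A,
        (fun x : α => if hx : x ∈ D (Φ r).1.1 then (Φ r).2.down.1 ⟨x, hx⟩ else none) = r.1.f := by
      intro r
      funext x
      by_cases hx : x ∈ D r.1.last
      · exact dif_pos hx
      · rw [dif_neg hx]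
        symm
        by_contra hne
        exact hx ((r.1.approx.2.1 x).mp hne)
    have hf : p.1.f = q.1.f := (hdec p).symm.trans (hfd.trans (hdec q))
    by_contra hpq
    have hne : p.1 ≠ q.1 := fun e => hpq (Subtype.ext e)
    apply hA p.1 p.2 q.1 q.2 hne
    refine sCond_compat p.1 q.1 hl hf ⟨nn p.1, ?_, ?_⟩
    · exact fun γ hγ hγ1 => nnspec p.1 γ (p.1.base_le.trans hγ) hγ1
    · intro γ hγ hγ1
      rw [hnn]
      exact nnspec q.1 γ (q.1.base_le.trans (hl ▸ hγ)) hγ1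
  have h1 : Cardinal.mk ↥A ≤ Cardinal.mk C := Cardinal.mk_le_of_injective hinj
  have h2 : Cardinal.mk C ≤ Cardinal.aleph 1 := by
    have hlift : Cardinal.lift.{1, 0} (Cardinal.aleph 1) = Cardinal.aleph 1 := by
      rw [Cardinal.lift_aleph, Ordinal.lift_one]
    have hbound : ∀ a : ↥(Set.Iio omega1),
        Cardinal.mk (ULift.{1} ((↥(D a.1) → Option ℚ) × ℕ)) ≤ Cardinal.aleph 1 := by
      intro a
      rw [Cardinal.mk_uLift]
      have hDc : (D a.1).Countable := levset_countable hT.1 a.2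
      have hfun : Cardinal.mk (↥(D a.1) → Option ℚ) ≤ Cardinal.aleph 1 :=
        funset_card hDc hCH0
      have hprod : Cardinal.mk ((↥(D a.1) → Option ℚ) × ℕ) ≤ Cardinal.aleph 1 := by
        rw [Cardinal.mk_prod, Cardinal.lift_id, Cardinal.lift_id, Cardinal.mk_nat]
        calc Cardinal.mk (↥(D a.1) → Option ℚ) * Cardinal.aleph0
            ≤ Cardinal.aleph 1 * Cardinal.aleph 1 :=
              mul_le_mul' hfun (Cardinal.aleph0_le_aleph 1)
          _ = Cardinal.aleph 1 := Cardinal.mul_eq_self (Cardinal.aleph0_le_aleph 1)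
      calc Cardinal.lift.{1} (Cardinal.mk ((↥(D a.1) → Option ℚ) × ℕ))
          ≤ Cardinal.lift.{1} (Cardinal.aleph 1) := Cardinal.lift_le.mpr hprod
        _ = Cardinal.aleph 1 := hlift
    calc Cardinal.mk C
        = Cardinal.sum (fun a : ↥(Set.Iio omega1) =>
            Cardinal.mk (ULift.{1} ((↥(D a.1) → Option ℚ) × ℕ))) := Cardinal.mk_sigma _
      _ ≤ Cardinal.sum (fun _ : ↥(Set.Iio omega1) => Cardinal.aleph 1) :=
          Cardinal.sum_le_sum _ _ hbound
      _ = Cardinal.mk ↥(Set.Iio omega1) * Cardinal.aleph 1 := Cardinal.sum_const' _ _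
      _ ≤ Cardinal.aleph 1 * Cardinal.aleph 1 := by
          apply mul_le_mul_left
          rw [Ordinal.mk_Iio_ordinal, show omega1.card = Cardinal.aleph 1 from Cardinal.card_ord _,
            hlift]
      _ = Cardinal.aleph 1 := Cardinal.mul_eq_self (Cardinal.aleph0_le_aleph 1)
  exact h1.trans h2
end
end
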